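/- arXiv:math/0605747 — 3 statements merged into one kernel-verified Lean document; each statement's English description precedes it below -/
import Mathlib

section
/- The Lebesgue measure of the set A_σ of all x ∈ (0,1) whose O¹-symbols satisfy g_{m+1}(x) > g_1(x) + g_2(x) + ⋯ + g_m(x) for every m ∈ ℕ, is equal to 0. Hence for Lebesgue-almost every x ∈ [0,1] there exists m with g_{m+1}(x) ≤ g_1(x) + ⋯ + g_m(x). -/
open MeasureTheory

noncomputable def osig (g : ℕ → ℕ) (k : ℕ) : ℝ := ∑ i ∈ Finset.range k, (g i : ℝ)

/-- The sum of the O¹-series with symbols `g_1 = g 0, g_2 = g 1, …`: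
`Ō¹(g_1,g_2,…) = ∑_{n≥1} (−1)^{n−1}/(g_1 (g_1+g_2) ⋯ (g_1+⋯+g_n))`. -/
noncomputable def bO1inf (g : ℕ → ℕ) : ℝ :=
  ∑' n : ℕ, (-1 : ℝ) ^ n / ∏ k ∈ Finset.range (n + 1), osig g (k + 1)

open scoped ENNReal Pointwise

namespace O1aux

noncomputable def P (g : ℕ → ℕ) (n : ℕ) : ℝ := ∏ k ∈ Finset.range (n + 1), osig g (k + 1)

noncomputable def term (g : ℕ → ℕ) (n : ℕ) : ℝ := (-1 : ℝ) ^ n / P g n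

lemma bO1inf_eq (g : ℕ → ℕ) : bO1inf g = ∑' n, term g n := rfl

lemma osig_ge (g : ℕ → ℕ) (hg : ∀ n, 0 < g n) (k : ℕ) : (k : ℝ) ≤ osig g k := by
  unfold osig
  calc (k : ℝ) = ∑ _i ∈ Finset.range k, (1:ℝ) := by simp
  _ ≤ _ := Finset.sum_le_sum fun i _ => by exact_mod_cast hg i

lemma osig_pos (g : ℕ → ℕ) (hg : ∀ n, 0 < g n) {k : ℕ} (hk : 0 < k) : 0 < osig g k :=
  lt_of_lt_of_le (by exact_mod_cast hk) (osig_ge g hg k)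

lemma P_succ (g : ℕ → ℕ) (n : ℕ) : P g (n+1) = P g n * osig g (n+2) := by
  rw [P, P, Finset.prod_range_succ]

lemma P_ge (g : ℕ → ℕ) (hg : ∀ n, 0 < g n) (n : ℕ) : (2:ℝ)^n ≤ P g n := by
  induction n with
  | zero =>
    simpa [P] using osig_ge g hg 1
  | succ n ih =>
    have h2 : (2:ℝ) ≤ osig g (n + 2) := by
      calc (2:ℝ) ≤ ((n+2 : ℕ) : ℝ) := by exact_mod_cast Nat.le_add_left 2 n
      _ ≤ _ := osig_ge g hg (n+2)
    calc (2:ℝ)^(n+1) = 2^n * 2 := by ring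
    _ ≤ P g n * osig g (n+2) := by
        apply mul_le_mul (le_refl _ |>.trans ih) h2 (by norm_num)
        exact le_trans (by positivity) ih
    _ = P g (n+1) := (P_succ g n).symm

lemma P_pos (g : ℕ → ℕ) (hg : ∀ n, 0 < g n) (n : ℕ) : 0 < P g n :=
  lt_of_lt_of_le (by positivity) (P_ge g hg n)

lemma summable_term (g : ℕ → ℕ) (hg : ∀ n, 0 < g n) : Summable (term g) := by
  apply Summable.of_norm_bounded (g := fun n => (1/2 : ℝ)^n)
    (summable_geometric_of_lt_one (by norm_num) (by norm_num))
  intro n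
  have hP := P_pos g hg n
  have hP2 := P_ge g hg n
  rw [term, norm_div, norm_pow, norm_neg, norm_one, one_pow, one_div, Real.norm_eq_abs,
    abs_of_pos hP]
  have h : ((1:ℝ)/2)^n = ((2:ℝ)^n)⁻¹ := by rw [one_div, inv_pow]
  rw [h]
  exact inv_anti₀ (by positivity) hP2

lemma pair_nonneg (g : ℕ → ℕ) (hg : ∀ n, 0 < g n) (k : ℕ) :
    0 ≤ term g (2*k) + term g (2*k+1) := by
  have h1 : term g (2*k) = 1 / P g (2*k) := by
    rw [term, Even.neg_one_pow ⟨k, by ring⟩]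
  have h2 : term g (2*k+1) = -(1 / P g (2*k+1)) := by
    rw [term, Odd.neg_one_pow ⟨k, by ring⟩, neg_div]
  rw [h1, h2]
  have hmono : P g (2*k) ≤ P g (2*k+1) := by
    rw [P_succ]
    nth_rewrite 1 [← mul_one (P g (2*k))]
    apply mul_le_mul_of_nonneg_left _ (P_pos g hg _).le
    refine le_trans ?_ (osig_ge g hg (2*k+2))
    exact_mod_cast Nat.one_le_iff_ne_zero.mpr (by omega)
  have := one_div_le_one_div_of_le (P_pos g hg (2*k)) hmono
  linarith

lemma bO1inf_nonneg (g : ℕ → ℕ) (hg : ∀ n, 0 < g n) : 0 ≤ bO1inf g := by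
  have hs := summable_term g hg
  have he : Summable fun k => term g (2*k) := hs.comp_injective (mul_right_injective₀ two_ne_zero)
  have ho : Summable fun k => term g (2*k+1) := by
    apply hs.comp_injective
    intro a b h; dsimp at h; omega
  rw [bO1inf_eq, ← tsum_even_add_odd he ho, ← Summable.tsum_add he ho]
  exact tsum_nonneg fun k => pair_nonneg g hg k

/-- shift of the symbol sequence -/
def next (g : ℕ → ℕ) : ℕ → ℕ := fun n => if n = 0 then g 0 + g 1 else g (n+1)

lemma next_pos (g : ℕ → ℕ) (hg : ∀ n, 0 < g n) : ∀ n, 0 < next g n := by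
  intro n; rcases n with _ | n <;> simp [next] <;> [exact Or.inl (hg 0); exact hg (n+2)]

lemma sum_next (g : ℕ → ℕ) (k : ℕ) :
    ∑ i ∈ Finset.range (k+1), next g i = ∑ i ∈ Finset.range (k+2), g i := by
  induction k with
  | zero => simp [next, Finset.sum_range_succ]
  | succ k ih =>
    rw [Finset.sum_range_succ, ih, Finset.sum_range_succ (n := k+2)]
    simp [next]

lemma osig_next (g : ℕ → ℕ) (k : ℕ) : osig (next g) (k+1) = osig g (k+2) := by
  unfold osig; exact_mod_cast congrArg (Nat.cast : ℕ → ℝ) (sum_next g k)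

lemma P_next (g : ℕ → ℕ) (m : ℕ) : P g (m+1) = osig g 1 * P (next g) m := by
  rw [P, Finset.prod_range_succ']
  rw [mul_comm]
  congr 1
  rw [P]
  apply Finset.prod_congr rfl
  intro k _
  exact (osig_next g k).symm

lemma osig_one (g : ℕ → ℕ) : osig g 1 = (g 0 : ℝ) := by simp [osig]

lemma recursion (g : ℕ → ℕ) (hg : ∀ n, 0 < g n) :
    bO1inf g = (1 - bO1inf (next g)) / (g 0 : ℝ) := by
  have hs := summable_term g hg
  have hs' := summable_term (next g) (next_pos g hg)
  have hg0 : (0:ℝ) < (g 0 : ℝ) := by exact_mod_cast hg 0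
  have hterm : ∀ n, term g (n+1) = -((g 0 : ℝ))⁻¹ * term (next g) n := by
    intro n
    have hPn : P (next g) n ≠ 0 := (P_pos _ (next_pos g hg) n).ne'
    rw [term, term, P_next, osig_one, pow_succ]
    field_simp
  rw [bO1inf_eq, Summable.tsum_eq_zero_add hs]
  have h0 : term g 0 = ((g 0 : ℝ))⁻¹ := by
    simp [term, P, osig_one, one_div]
  rw [h0]
  have : ∑' n, term g (n+1) = -((g 0 : ℝ))⁻¹ * ∑' n, term (next g) n := by
    rw [← tsum_mul_left]
    exact tsum_congr hterm
  rw [this, ← bO1inf_eq]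
  field_simp
  ring

lemma bO1inf_le (g : ℕ → ℕ) (hg : ∀ n, 0 < g n) : bO1inf g ≤ ((g 0 : ℝ))⁻¹ := by
  rw [recursion g hg]
  have hg0 : (0:ℝ) < (g 0 : ℝ) := by exact_mod_cast hg 0
  have hy := bO1inf_nonneg (next g) (next_pos g hg)
  rw [div_le_iff₀ hg0, inv_mul_cancel₀ hg0.ne']
  linarith

end O1aux

open scoped ENNReal Pointwise

namespace O1aux

def Aset (s : ℕ) : Set ℝ := {x | ∃ g : ℕ → ℕ, (∀ n, 0 < g n) ∧ s < g 0 ∧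
  (∀ m, 1 ≤ m → (∑ i ∈ Finset.range m, g i) < g m) ∧ x = bO1inf g}

lemma vol_image_affine (a b : ℝ) (S : Set ℝ) :
    volume ((fun y => a * y + b) '' S) = ENNReal.ofReal |a| * volume S := by
  have h1 : (fun y => a * y + b) '' S = (fun y => y + b) '' (a • S) := by
    rw [← Set.image_smul, Set.image_image]
    simp [smul_eq_mul]
  rw [h1]
  simp only [Set.image_add_right, measure_preimage_add_right, Measure.addHaar_smul]
  simp

lemma cover (s : ℕ) : Aset s ⊆ ⋃ t : {t : ℕ // s < t},
    (fun y => (1 - y) / ((t : ℕ) : ℝ)) '' Aset (2 * t) := by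
  rintro x ⟨g, hpos, hs, hcond, rfl⟩
  refine Set.mem_iUnion.2 ⟨⟨g 0, hs⟩, ?_⟩
  refine ⟨bO1inf (next g), ⟨next g, next_pos g hpos, ?_, ?_, rfl⟩, (recursion g hpos).symm⟩
  · have h1 : g 0 < g 1 := by simpa using hcond 1 le_rfl
    have hn0 : next g 0 = g 0 + g 1 := rfl
    simp only [hn0]
    omega
  · intro m hm
    obtain ⟨k, rfl⟩ : ∃ k, m = k + 1 := ⟨m - 1, by omega⟩
    rw [sum_next]
    have h2 := hcond (k+2) (by omega)
    simpa [next] using h2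

lemma vol_image (t : ℕ) (ht : 0 < t) (S : Set ℝ) :
    volume ((fun y => (1 - y) / (t : ℝ)) '' S) = ((t : ℝ≥0∞))⁻¹ * volume S := by
  have htR : (0:ℝ) < (t : ℝ) := by exact_mod_cast ht
  have heq : (fun y : ℝ => (1 - y) / (t : ℝ)) = fun y => (-((t:ℝ))⁻¹) * y + ((t:ℝ))⁻¹ := by
    funext y; field_simp; ring
  rw [heq, vol_image_affine]
  congr 1
  rw [abs_neg, abs_of_pos (by positivity), ENNReal.ofReal_inv_of_pos htR,
    ENNReal.ofReal_natCast]

lemma tsum_inv_sq_le (s : ℕ) (hs : 1 ≤ s) :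
    ∑' t : {t : ℕ // s < t}, (((t : ℕ) : ℝ≥0∞))⁻¹ * (((t : ℕ) : ℝ≥0∞))⁻¹
      ≤ ((s : ℝ≥0∞))⁻¹ := by
  set f : ℕ → ℝ≥0∞ := fun t => ((t : ℝ≥0∞))⁻¹ * ((t : ℝ≥0∞))⁻¹ with hf
  have key : ∀ t : ℕ, s < t → f t = ENNReal.ofReal (((t:ℝ)^2)⁻¹) := by
    intro t ht
    have htR : (0:ℝ) < (t:ℝ) := by exact_mod_cast lt_of_le_of_lt (Nat.zero_le s) ht
    rw [hf]
    dsimp only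
    rw [← ENNReal.ofReal_natCast t, ← ENNReal.ofReal_inv_of_pos htR,
      ← ENNReal.ofReal_mul (by positivity)]
    congr 1
    rw [sq, mul_inv]
  rw [show (∑' t : {t : ℕ // s < t}, (((t : ℕ) : ℝ≥0∞))⁻¹ * (((t : ℕ) : ℝ≥0∞))⁻¹)
      = ∑' t : ℕ, Set.indicator {t : ℕ | s < t} f t from tsum_subtype {t : ℕ | s < t} f,
    ENNReal.tsum_eq_iSup_sum]
  apply iSup_le
  intro F
  set N := max (F.sup id) s with hN
  have hsN : s ≤ N := le_max_right _ _
  calc ∑ t ∈ F, Set.indicator {t : ℕ | s < t} f t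
      = ∑ t ∈ F.filter (fun t => s < t), f t := by
        rw [Finset.sum_filter]
        exact Finset.sum_congr rfl fun t _ => by simp [Set.indicator_apply]
    _ ≤ ∑ t ∈ Finset.Ioc s N, f t := by
        apply Finset.sum_le_sum_of_subset
        intro t htmem
        simp only [Finset.mem_filter] at htmem
        simp only [Finset.mem_Ioc]
        exact ⟨htmem.2, le_trans (Finset.le_sup (f := id) htmem.1) (le_max_left _ _)⟩
    _ = ENNReal.ofReal (∑ t ∈ Finset.Ioc s N, ((t:ℝ)^2)⁻¹) := by
        rw [ENNReal.ofReal_sum_of_nonneg (fun t _ => by positivity)]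
        exact Finset.sum_congr rfl fun t htmem =>
          key t (Finset.mem_Ioc.1 htmem).1
    _ ≤ ENNReal.ofReal (((s:ℝ))⁻¹ - ((N:ℝ))⁻¹) := by
        apply ENNReal.ofReal_le_ofReal
        exact sum_Ioc_inv_sq_le_sub (by omega) hsN
    _ ≤ ((s : ℝ≥0∞))⁻¹ := by
        rw [← ENNReal.ofReal_natCast s, ← ENNReal.ofReal_inv_of_pos (by exact_mod_cast hs)]
        apply ENNReal.ofReal_le_ofReal
        have : (0:ℝ) ≤ ((N:ℝ))⁻¹ := by positivity
        linarith

lemma vol_Aset_le (n : ℕ) : ∀ s : ℕ, 1 ≤ s →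
    volume (Aset s) ≤ ((2 : ℝ≥0∞))⁻¹ ^ n * ((s : ℝ≥0∞))⁻¹ := by
  induction n with
  | zero =>
    intro s hs
    rw [pow_zero, one_mul]
    have hsub : Aset s ⊆ Set.Icc (0:ℝ) ((s:ℝ))⁻¹ := by
      rintro x ⟨g, hpos, hlt, hcond, rfl⟩
      refine ⟨bO1inf_nonneg g hpos, (bO1inf_le g hpos).trans ?_⟩
      exact inv_anti₀ (by exact_mod_cast hs) (by exact_mod_cast hlt.le)
    calc volume (Aset s) ≤ volume (Set.Icc (0:ℝ) ((s:ℝ))⁻¹) := measure_mono hsub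
      _ = ENNReal.ofReal (((s:ℝ))⁻¹ - 0) := Real.volume_Icc
      _ = ((s : ℝ≥0∞))⁻¹ := by
          rw [sub_zero, ENNReal.ofReal_inv_of_pos (by exact_mod_cast hs),
            ENNReal.ofReal_natCast]
  | succ n ih =>
    intro s hs
    have h2inv : ∀ t : ℕ, s < t →
        ((t : ℝ≥0∞))⁻¹ * (((2 : ℝ≥0∞))⁻¹ ^ n * (((2 * t : ℕ) : ℝ≥0∞))⁻¹)
          = ((2 : ℝ≥0∞))⁻¹ ^ (n+1) * (((t : ℝ≥0∞))⁻¹ * ((t : ℝ≥0∞))⁻¹) := by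
      intro t ht
      have : (((2 * t : ℕ) : ℝ≥0∞)) = 2 * (t : ℝ≥0∞) := by push_cast; ring
      rw [this, ENNReal.mul_inv (Or.inl two_ne_zero) (Or.inl ENNReal.ofNat_ne_top), pow_succ]
      ring
    calc volume (Aset s)
        ≤ ∑' t : {t : ℕ // s < t},
            volume ((fun y => (1 - y) / ((t : ℕ) : ℝ)) '' Aset (2 * t)) :=
          (measure_mono (cover s)).trans (measure_iUnion_le _)
      _ ≤ ∑' t : {t : ℕ // s < t},
            ((2 : ℝ≥0∞))⁻¹ ^ (n+1) * ((((t:ℕ) : ℝ≥0∞))⁻¹ * (((t:ℕ) : ℝ≥0∞))⁻¹) := by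
          apply ENNReal.tsum_le_tsum
          intro t
          rw [vol_image t (by omega) _]
          refine le_trans (mul_le_mul_right (ih (2 * t) (by omega)) _) ?_
          rw [h2inv t t.2]
      _ = ((2 : ℝ≥0∞))⁻¹ ^ (n+1) *
            ∑' t : {t : ℕ // s < t}, ((((t:ℕ) : ℝ≥0∞))⁻¹ * (((t:ℕ) : ℝ≥0∞))⁻¹) :=
          ENNReal.tsum_mul_left
      _ ≤ ((2 : ℝ≥0∞))⁻¹ ^ (n+1) * ((s : ℝ≥0∞))⁻¹ :=
          mul_le_mul_right (tsum_inv_sq_le s hs) _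

lemma vol_Aset_eq_zero (s : ℕ) (hs : 1 ≤ s) : volume (Aset s) = 0 := by
  refine le_antisymm ?_ zero_le
  have hlim : Filter.Tendsto (fun n => ((2:ℝ≥0∞))⁻¹ ^ n) Filter.atTop (nhds 0) :=
    ENNReal.tendsto_pow_atTop_nhds_zero_of_lt_one
      (ENNReal.inv_lt_one.2 ENNReal.one_lt_two)
  refine ge_of_tendsto' hlim ?_
  intro n
  refine (vol_Aset_le n s hs).trans ?_
  calc ((2 : ℝ≥0∞))⁻¹ ^ n * ((s : ℝ≥0∞))⁻¹ ≤ ((2 : ℝ≥0∞))⁻¹ ^ n * 1 := by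
        apply mul_le_mul_right
        exact ENNReal.inv_le_one.2 (by exact_mod_cast hs)
    _ = ((2 : ℝ≥0∞))⁻¹ ^ n := mul_one _

lemma vol_Aset0 : volume (Aset 0) = 0 := by
  refine le_antisymm ?_ zero_le
  calc volume (Aset 0)
      ≤ ∑' t : {t : ℕ // 0 < t},
          volume ((fun y => (1 - y) / ((t : ℕ) : ℝ)) '' Aset (2 * t)) :=
        (measure_mono (cover 0)).trans (measure_iUnion_le _)
    _ = 0 := ENNReal.tsum_eq_zero.2 fun t => by
        rw [vol_image t t.2, vol_Aset_eq_zero (2 * t) (by omega), mul_zero]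

end O1aux

/-- the set `A_σ` of `x ∈ (0,1)` admitting an O¹-representation whose symbols
satisfy `g_{m+1} > g_1 + ⋯ + g_m` for every `m ≥ 1` has Lebesgue measure `0`; hence for
Lebesgue-a.e. `x ∈ [0,1]`, every O¹-representation of `x` has `g_{m+1} ≤ g_1 + ⋯ + g_m`
for some `m`. -/
theorem o1_Asigma_null :
    volume {x : ℝ | x ∈ Set.Ioo (0 : ℝ) 1 ∧ ∃ g : ℕ → ℕ, (∀ n, 0 < g n) ∧
      x = bO1inf g ∧ ∀ m, 1 ≤ m → (∑ i ∈ Finset.range m, g i) < g m} = 0 ∧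
    (∀ᵐ x ∂(volume : Measure ℝ), x ∈ Set.Icc (0 : ℝ) 1 →
      ∀ g : ℕ → ℕ, (∀ n, 0 < g n) → x = bO1inf g →
        ∃ m, 1 ≤ m ∧ g m ≤ ∑ i ∈ Finset.range m, g i) := by
  constructor
  · refine measure_mono_null ?_ O1aux.vol_Aset0
    rintro x ⟨_, g, hpos, hval, hcond⟩
    exact ⟨g, hpos, hpos 0, hcond, hval⟩
  · rw [MeasureTheory.ae_iff]
    refine measure_mono_null ?_ O1aux.vol_Aset0
    intro x hx
    simp only [Set.mem_setOf_eq] at hx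
    push_neg at hx
    obtain ⟨-, g, hpos, hval, hbad⟩ := hx
    exact ⟨g, hpos, hpos 0, fun m hm => hbad m hm, hval⟩
end

section
/- If V_k = {1, 2, …, m_k} and ∑_{k=1}^{∞} 1/m_k = +∞, then the set C[V_k] of all x ∈ [0,1] whose O¹-symbols satisfy g_n(x) ∈ V_n for all n has Lebesgue measure 0. -/
open MeasureTheory

namespace O1Aux

noncomputable def pprod (g : ℕ → ℕ) (n : ℕ) : ℝ := ∏ k ∈ Finset.range n, osig g (k + 1)

lemma osig_succ (g : ℕ → ℕ) (k : ℕ) : osig g (k + 1) = osig g k + g k :=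
  Finset.sum_range_succ _ _

lemma le_osig {g : ℕ → ℕ} (hg : ∀ n, 0 < g n) (k : ℕ) : (k : ℝ) ≤ osig g k := by
  calc (k : ℝ) = ∑ _i ∈ Finset.range k, (1 : ℝ) := by simp
  _ ≤ _ := Finset.sum_le_sum fun i _ => by exact_mod_cast hg i

lemma osig_nonneg {g : ℕ → ℕ} (hg : ∀ n, 0 < g n) (k : ℕ) : 0 ≤ osig g k :=
  le_trans (by positivity) (le_osig hg k)

lemma pprod_pos {g : ℕ → ℕ} (hg : ∀ n, 0 < g n) (n : ℕ) : 0 < pprod g n :=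
  Finset.prod_pos fun k _ => lt_of_lt_of_le (by positivity) (le_osig hg (k + 1))

lemma pprod_succ (g : ℕ → ℕ) (n : ℕ) :
    pprod g (n + 1) = pprod g n * osig g (n + 1) := Finset.prod_range_succ _ _

lemma factorial_le_pprod {g : ℕ → ℕ} (hg : ∀ n, 0 < g n) (n : ℕ) :
    (Nat.factorial n : ℝ) ≤ pprod g n := by
  rw [← Finset.prod_range_add_one_eq_factorial]
  push_cast
  exact Finset.prod_le_prod (fun k _ => by positivity) (fun k _ => by
    exact_mod_cast le_osig hg (k + 1))

lemma pprod_mono {g : ℕ → ℕ} (hg : ∀ n, 0 < g n) : Monotone (pprod g) := by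
  apply monotone_nat_of_le_succ
  intro n
  rw [pprod_succ]
  have h1 : (1 : ℝ) ≤ osig g (n + 1) := le_trans (by exact_mod_cast Nat.one_le_iff_ne_zero.2 (Nat.succ_ne_zero n)) (le_osig hg (n + 1))
  exact le_mul_of_one_le_right (pprod_pos hg n).le h1

lemma summable_inv_pprod {g : ℕ → ℕ} (hg : ∀ n, 0 < g n) :
    Summable (fun n => 1 / pprod g (n + 1)) := by
  have hfac : Summable (fun n : ℕ => 1 / (Nat.factorial (n + 1) : ℝ)) := by
    have := (summable_nat_add_iff (f := fun n : ℕ => 1 / (Nat.factorial n : ℝ)) 1).2 ?_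
    · simpa using this
    · simpa using Real.summable_pow_div_factorial 1
  apply Summable.of_nonneg_of_le (fun n => one_div_nonneg.2 (pprod_pos hg (n + 1)).le) (fun n => ?_) hfac
  exact one_div_le_one_div_of_le (by exact_mod_cast Nat.factorial_pos (n + 1))
    (factorial_le_pprod hg (n + 1))

end O1Aux

namespace O1Aux

lemma alt_partial {b : ℕ → ℝ} (hb : Antitone b) (h0 : ∀ n, 0 ≤ b n) (N : ℕ) :
    0 ≤ (∑ j ∈ Finset.range N, (-1 : ℝ) ^ j * b j) ∧
      (∑ j ∈ Finset.range N, (-1 : ℝ) ^ j * b j) ≤ b 0 := by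
  set S : ℕ → ℝ := fun N => ∑ j ∈ Finset.range N, (-1 : ℝ) ^ j * b j with hS
  have hsucc : ∀ n, S (n + 1) = S n + (-1 : ℝ) ^ n * b n := by
    intro n; simp [hS, Finset.sum_range_succ]
  have key : ∀ k, 0 ≤ S (2 * k) ∧ S (2 * k + 1) ≤ b 0 := by
    intro k
    induction k with
    | zero =>
      refine ⟨by simp [hS], ?_⟩
      rw [hsucc]; simp [hS]
    | succ k ih =>
      have e1 : S (2 * k + 1) = S (2 * k) + b (2 * k) := by
        rw [hsucc]; rw [pow_mul]; norm_num
      have e2 : S (2 * k + 2) = S (2 * k + 1) - b (2 * k + 1) := by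
        rw [hsucc (2 * k + 1)]; rw [pow_succ, pow_mul]; norm_num; ring
      have e3 : S (2 * k + 3) = S (2 * k + 2) + b (2 * k + 2) := by
        rw [hsucc (2 * k + 2)]
        have : ((-1 : ℝ)) ^ (2 * k + 2) = 1 := by rw [pow_add, pow_mul]; norm_num
        rw [this]; ring
      constructor
      · have h2 : 2 * (k + 1) = 2 * k + 2 := by ring
        rw [h2, e2, e1]
        have := hb (Nat.le_succ (2 * k))
        linarith [ih.1]
      · have h2 : 2 * (k + 1) + 1 = 2 * k + 3 := by ring
        rw [h2, e3, e2]
        have := hb (Nat.le_succ (2 * k + 1))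
        linarith [ih.2]
  rcases Nat.even_or_odd N with ⟨k, hk⟩ | ⟨k, hk⟩
  · subst hk
    have h2 : k + k = 2 * k := by ring
    rw [h2]
    refine ⟨(key k).1, ?_⟩
    have e1 : S (2 * k + 1) = S (2 * k) + b (2 * k) := by
      rw [hsucc]; rw [pow_mul]; norm_num
    have := (key k).2
    have := h0 (2 * k)
    linarith
  · subst hk
    refine ⟨?_, (key k).2⟩
    have e1 : S (2 * k + 1) = S (2 * k) + b (2 * k) := by
      rw [hsucc]; rw [pow_mul]; norm_num
    have := (key k).1
    have := h0 (2 * k)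
    linarith

lemma alt_tsum_bounds {b : ℕ → ℝ} (hb : Antitone b) (h0 : ∀ n, 0 ≤ b n)
    (hs : Summable fun n => (-1 : ℝ) ^ n * b n) :
    0 ≤ (∑' n, (-1 : ℝ) ^ n * b n) ∧ (∑' n, (-1 : ℝ) ^ n * b n) ≤ b 0 := by
  have ht := hs.hasSum.tendsto_sum_nat
  constructor
  · exact ge_of_tendsto' ht fun N => (alt_partial hb h0 N).1
  · exact le_of_tendsto' ht fun N => (alt_partial hb h0 N).2

end O1Aux

namespace O1Aux

noncomputable def PP (g : ℕ → ℕ) (K : ℕ) : ℝ :=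
  ∑ n ∈ Finset.range K, (-1 : ℝ) ^ n / pprod g (n + 1)

noncomputable def LL (g : ℕ → ℕ) (K : ℕ) : ℝ := 1 / (pprod g K * (osig g K + 1))

lemma bO1inf_eq (g : ℕ → ℕ) : bO1inf g = ∑' n, (-1 : ℝ) ^ n * (1 / pprod g (n + 1)) := by
  unfold bO1inf pprod
  congr 1; funext n; rw [mul_one_div]

lemma summable_alt {g : ℕ → ℕ} (hg : ∀ n, 0 < g n) :
    Summable (fun n => (-1 : ℝ) ^ n * (1 / pprod g (n + 1))) := by
  apply Summable.of_abs
  have : (fun n => |(-1 : ℝ) ^ n * (1 / pprod g (n + 1))|) = fun n => 1 / pprod g (n + 1) := by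
    funext n
    rw [abs_mul, abs_pow, abs_neg, abs_one, one_pow, one_mul,
      abs_of_nonneg (one_div_nonneg.2 (pprod_pos hg (n + 1)).le)]
  rw [this]
  exact summable_inv_pprod hg

lemma tail_bound {g : ℕ → ℕ} (hg : ∀ n, 0 < g n) (K : ℕ) :
    0 ≤ (-1 : ℝ) ^ K * (bO1inf g - PP g K) ∧
      (-1 : ℝ) ^ K * (bO1inf g - PP g K) ≤ 1 / pprod g (K + 1) := by
  set f : ℕ → ℝ := fun n => (-1 : ℝ) ^ n * (1 / pprod g (n + 1)) with hf
  have hsf : Summable f := summable_alt hg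
  have hsplit := Summable.sum_add_tsum_nat_add K hsf
  have hPP : PP g K = ∑ i ∈ Finset.range K, f i := by
    unfold PP; congr 1; funext n; simp only [hf, mul_one_div]
  have hdiff : bO1inf g - PP g K = ∑' i, f (i + K) := by
    rw [bO1inf_eq, ← hf, hPP, ← hsplit]; ring
  set b : ℕ → ℝ := fun i => 1 / pprod g (i + K + 1) with hb
  have hfb : ∀ i, f (i + K) = (-1 : ℝ) ^ K * ((-1 : ℝ) ^ i * b i) := by
    intro i
    simp only [hf, hb, pow_add]; ring
  have hb_anti : Antitone b := by
    apply antitone_nat_of_succ_le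
    intro n
    exact one_div_le_one_div_of_le (pprod_pos hg (n + K + 1))
      (pprod_mono hg (by omega))
  have hb_nonneg : ∀ n, 0 ≤ b n := fun n => one_div_nonneg.2 (pprod_pos hg (n + K + 1)).le
  have hbs : Summable (fun i => (-1 : ℝ) ^ i * b i) := by
    have h1 : Summable (fun i => f (i + K)) := (summable_nat_add_iff K).2 hsf
    have h2 : Summable (fun i => ((-1 : ℝ) ^ K)⁻¹ * f (i + K)) := h1.mul_left _
    have : (fun i => ((-1 : ℝ) ^ K)⁻¹ * f (i + K)) = fun i => (-1 : ℝ) ^ i * b i := by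
      funext i
      rw [hfb i, ← mul_assoc, inv_mul_cancel₀ (by simp : ((-1 : ℝ) ^ K) ≠ 0), one_mul]
    rwa [this] at h2
  have htsum : (-1 : ℝ) ^ K * (bO1inf g - PP g K) = ∑' i, (-1 : ℝ) ^ i * b i := by
    rw [hdiff]
    have : ∑' i, f (i + K) = (-1 : ℝ) ^ K * ∑' i, (-1 : ℝ) ^ i * b i := by
      rw [← tsum_mul_left]
      exact tsum_congr hfb
    rw [this, ← mul_assoc, ← pow_add]
    have : ((-1 : ℝ)) ^ (K + K) = 1 := by
      rw [← two_mul, pow_mul]; norm_num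
    rw [this, one_mul]
  have hbnd := alt_tsum_bounds hb_anti hb_nonneg hbs
  rw [htsum]
  refine ⟨hbnd.1, le_trans hbnd.2 ?_⟩
  rw [hb]
  simp

lemma dist_le {g : ℕ → ℕ} (hg : ∀ n, 0 < g n) (K : ℕ) :
    |bO1inf g - PP g K| ≤ LL g K := by
  have h := tail_bound hg K
  have habs : |bO1inf g - PP g K| ≤ 1 / pprod g (K + 1) := by
    rcases Nat.even_or_odd K with hK | hK
    · rw [hK.neg_one_pow, one_mul] at h
      rw [abs_le]; constructor
      · linarith [one_div_nonneg.2 (pprod_pos hg (K + 1)).le, h.1]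
      · exact h.2
    · rw [hK.neg_one_pow, neg_one_mul] at h
      rw [abs_le]; constructor
      · linarith [h.2]
      · linarith [h.1]
  refine le_trans habs ?_
  unfold LL
  apply one_div_le_one_div_of_le
  · exact mul_pos (pprod_pos hg K) (by linarith [osig_nonneg hg K])
  · rw [pprod_succ, osig_succ]
    have h1 : (1 : ℝ) ≤ g K := by exact_mod_cast hg K
    nlinarith [pprod_pos hg K, osig_nonneg hg K]

end O1Aux

namespace O1Aux

def trunc (g : ℕ → ℕ) (K : ℕ) : ℕ → ℕ := fun i => if i < K then g i else 1

lemma trunc_pos {g : ℕ → ℕ} (hg : ∀ n, 0 < g n) (K : ℕ) : ∀ n, 0 < trunc g K n := by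
  intro n; unfold trunc; split <;> simp [hg n]

lemma osig_trunc (g : ℕ → ℕ) {K j : ℕ} (hj : j ≤ K) : osig (trunc g K) j = osig g j := by
  unfold osig
  apply Finset.sum_congr rfl
  intro i hi
  rw [Finset.mem_range] at hi
  have : i < K := lt_of_lt_of_le hi hj
  simp [trunc, this]

lemma pprod_trunc (g : ℕ → ℕ) {K n : ℕ} (hn : n ≤ K) : pprod (trunc g K) n = pprod g n := by
  unfold pprod
  apply Finset.prod_congr rfl
  intro k hk
  rw [Finset.mem_range] at hk
  exact osig_trunc g (by omega)

lemma PP_trunc (g : ℕ → ℕ) (K : ℕ) : PP (trunc g K) K = PP g K := by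
  unfold PP
  apply Finset.sum_congr rfl
  intro n hn
  rw [Finset.mem_range] at hn
  rw [pprod_trunc g (by omega)]

lemma LL_trunc (g : ℕ → ℕ) (K : ℕ) : LL (trunc g K) K = LL g K := by
  unfold LL
  rw [pprod_trunc g le_rfl, osig_trunc g le_rfl]

attribute [local instance] Classical.decEq

noncomputable def DD (m : ℕ → ℕ) : ℕ → Finset (ℕ → ℕ)
  | 0 => {fun _ => 1}
  | (K + 1) => (DD m K ×ˢ Finset.Icc 1 (m K)).image fun p => Function.update p.1 K p.2

lemma DD_one {m : ℕ → ℕ} {K : ℕ} {d : ℕ → ℕ} (hd : d ∈ DD m K) :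
    ∀ i, K ≤ i → d i = 1 := by
  induction K generalizing d with
  | zero =>
    simp [DD] at hd
    subst hd; intro i _; rfl
  | succ K ih =>
    simp only [DD, Finset.mem_image, Finset.mem_product] at hd
    obtain ⟨⟨d₀, c⟩, ⟨h₀, _⟩, rfl⟩ := hd
    intro i hi
    rw [Function.update_of_ne (by omega)]
    exact ih h₀ i (by omega)

lemma DD_pos {m : ℕ → ℕ} (hm : ∀ k, 0 < m k) {K : ℕ} {d : ℕ → ℕ} (hd : d ∈ DD m K) :
    ∀ i, 0 < d i := by
  induction K generalizing d with
  | zero =>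
    simp [DD] at hd; subst hd; intro i; exact Nat.one_pos
  | succ K ih =>
    simp only [DD, Finset.mem_image, Finset.mem_product, Finset.mem_Icc] at hd
    obtain ⟨⟨d₀, c⟩, ⟨h₀, hc⟩, rfl⟩ := hd
    intro i
    rcases eq_or_ne i K with rfl | hne
    · rw [Function.update_self]; omega
    · rw [Function.update_of_ne hne]; exact ih h₀ i

lemma trunc_mem_DD {m g : ℕ → ℕ} (hg : ∀ n, 0 < g n) (hgm : ∀ n, g n ≤ m n) (K : ℕ) :
    trunc g K ∈ DD m K := by
  induction K with
  | zero =>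
    simp [DD, trunc]
    funext i; rfl
  | succ K ih =>
    have : trunc g (K + 1) = Function.update (trunc g K) K (g K) := by
      funext i
      rcases eq_or_ne i K with rfl | hne
      · simp [trunc, Function.update_self]
      · rw [Function.update_of_ne hne]
        unfold trunc
        rcases Nat.lt_or_ge i K with h | h
        · simp [h, Nat.lt_succ_of_lt h]
        · have h1 : ¬ i < K := by omega
          have h2 : ¬ i < K + 1 := by omega
          simp [h1, h2]
    rw [this]
    simp only [DD, Finset.mem_image]
    exact ⟨⟨trunc g K, g K⟩, Finset.mem_product.2 ⟨ih, Finset.mem_Icc.2 ⟨hg K, hgm K⟩⟩, rfl⟩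

end O1Aux

namespace O1Aux

lemma telescope (s : ℝ) (hs : 0 ≤ s) (M : ℕ) :
    ∑ c ∈ Finset.Icc 1 M, 1 / ((s + c) * (s + c + 1)) = 1 / (s + 1) - 1 / (s + M + 1) := by
  induction M with
  | zero => simp
  | succ M ih =>
    rw [Finset.sum_Icc_succ_top (by omega), ih]
    have h1 : (0:ℝ) < s + M + 1 := by positivity
    have h2 : (0:ℝ) < s + M + 2 := by positivity
    have hM : ((M:ℝ) + 1) = (((M+1 : ℕ)):ℝ) := by push_cast; ring
    push_cast
    field_simp
    ring

lemma osig_update_le (d : ℕ → ℕ) (K c : ℕ) {j : ℕ} (hj : j ≤ K) :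
    osig (Function.update d K c) j = osig d j := by
  unfold osig
  apply Finset.sum_congr rfl
  intro i hi
  rw [Finset.mem_range] at hi
  rw [Function.update_of_ne (by omega)]

lemma pprod_update_le (d : ℕ → ℕ) (K c : ℕ) {n : ℕ} (hn : n ≤ K) :
    pprod (Function.update d K c) n = pprod d n := by
  unfold pprod
  apply Finset.prod_congr rfl
  intro k hk
  rw [Finset.mem_range] at hk
  exact osig_update_le d K c (by omega)

lemma update_pos {d : ℕ → ℕ} (hd : ∀ i, 0 < d i) {K c : ℕ} (hc : 0 < c) :
    ∀ i, 0 < Function.update d K c i := by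
  intro i
  rcases eq_or_ne i K with rfl | hne
  · rw [Function.update_self]; exact hc
  · rw [Function.update_of_ne hne]; exact hd i

lemma LL_update_sum {M : ℕ} (hM : 0 < M) {K : ℕ} {d : ℕ → ℕ} (hd : ∀ i, 0 < d i) :
    ∑ c ∈ Finset.Icc 1 M, LL (Function.update d K c) (K + 1)
      ≤ ((M : ℝ) / (M + 1)) * LL d K := by
  set s : ℝ := osig d K with hs
  have hs0 : 0 ≤ s := osig_nonneg hd K
  have hp0 : 0 < pprod d K := pprod_pos hd K
  have hLL : ∀ c ∈ Finset.Icc 1 M,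
      LL (Function.update d K c) (K + 1) = (1 / pprod d K) * (1 / ((s + c) * (s + c + 1))) := by
    intro c hc
    rw [Finset.mem_Icc] at hc
    unfold LL
    rw [pprod_succ, pprod_update_le d K c le_rfl, osig_succ,
      osig_update_le d K c le_rfl, Function.update_self, ← hs]
    have h1 : (0:ℝ) < s + c := by
      have : (1:ℝ) ≤ (c:ℝ) := by exact_mod_cast hc.1
      linarith
    field_simp
  rw [Finset.sum_congr rfl hLL, ← Finset.mul_sum, telescope s hs0 M]
  have htel : 1 / (s + 1) - 1 / (s + M + 1) = (M : ℝ) / ((s + 1) * (s + M + 1)) := by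
    have h1 : (0:ℝ) < s + 1 := by positivity
    have h2 : (0:ℝ) < s + M + 1 := by positivity
    field_simp
    try ring
  rw [htel]
  unfold LL
  rw [← hs]
  have h1 : (0:ℝ) < s + 1 := by positivity
  have h2 : (0:ℝ) < s + ↑M + 1 := by positivity
  have e1 : 1 / pprod d K * ((M:ℝ) / ((s + 1) * (s + ↑M + 1)))
      = (M:ℝ) / (pprod d K * ((s + 1) * (s + ↑M + 1))) := by
    rw [div_mul_div_comm, one_mul]
  have e2 : (M:ℝ) / ((M:ℝ) + 1) * (1 / (pprod d K * (s + 1)))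
      = (M:ℝ) / (((M:ℝ) + 1) * (pprod d K * (s + 1))) := by
    rw [div_mul_div_comm, mul_one]
  rw [e1, e2]
  apply div_le_div_of_nonneg_left (by positivity) (by positivity)
  nlinarith [hp0, hs0, mul_nonneg (mul_nonneg hp0.le h1.le) hs0]

end O1Aux

namespace O1Aux

attribute [local instance] Classical.decEq

lemma sum_LL_le {m : ℕ → ℕ} (hm : ∀ k, 0 < m k) :
    ∀ K, ∑ d ∈ DD m K, LL d K ≤ ∏ k ∈ Finset.range K, ((m k : ℝ) / (m k + 1)) := by
  intro K
  induction K with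
  | zero =>
    simp [DD, LL, pprod, osig]
  | succ K ih =>
    have hinj : Set.InjOn (fun p : (ℕ → ℕ) × ℕ => Function.update p.1 K p.2)
        ((DD m K ×ˢ Finset.Icc 1 (m K)) : Finset ((ℕ → ℕ) × ℕ)) := by
      rintro ⟨d, c⟩ hp ⟨d', c'⟩ hp' heq
      simp only [Finset.coe_product, Set.mem_prod, Finset.mem_coe, Finset.mem_product] at hp hp'
      have hc : c = c' := by
        have := congrFun heq K
        simpa using this
      have hd : d = d' := by
        funext i
        rcases eq_or_ne i K with rfl | hne
        · rw [DD_one hp.1 i le_rfl, DD_one hp'.1 i le_rfl]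
        · have := congrFun heq i
          dsimp only at this
          rwa [Function.update_of_ne hne, Function.update_of_ne hne] at this
      simp [hc, hd]
    have hsum : ∑ d ∈ DD m (K + 1), LL d (K + 1)
        = ∑ p ∈ DD m K ×ˢ Finset.Icc 1 (m K), LL (Function.update p.1 K p.2) (K + 1) := by
      rw [show DD m (K + 1) = (DD m K ×ˢ Finset.Icc 1 (m K)).image
        (fun p => Function.update p.1 K p.2) from rfl]
      exact Finset.sum_image fun p hp q hq => hinj (by exact_mod_cast hp) (by exact_mod_cast hq)
    rw [hsum, Finset.sum_product, Finset.prod_range_succ]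
    calc ∑ d ∈ DD m K, ∑ c ∈ Finset.Icc 1 (m K), LL (Function.update d K c) (K + 1)
        ≤ ∑ d ∈ DD m K, ((m K : ℝ) / (m K + 1)) * LL d K := by
          apply Finset.sum_le_sum
          intro d hd
          exact LL_update_sum (hm K) (DD_pos hm hd)
      _ = ((m K : ℝ) / (m K + 1)) * ∑ d ∈ DD m K, LL d K := by rw [Finset.mul_sum]
      _ ≤ ((m K : ℝ) / (m K + 1)) * ∏ k ∈ Finset.range K, ((m k : ℝ) / (m k + 1)) := by
          apply mul_le_mul_of_nonneg_left ih (by positivity)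
      _ = (∏ k ∈ Finset.range K, ((m k : ℝ) / (m k + 1))) * ((m K : ℝ) / (m K + 1)) := by ring

end O1Aux


open O1Aux in
/-- Theorem 4: if `V_k = {1,…,m_k}` and `∑ 1/m_k = +∞`, then the
(closure of the) set of `x ∈ [0,1]` whose O¹-symbols satisfy `g_k(x) ≤ m_k` for all `k`
has Lebesgue measure `0`. -/
theorem o1_CV_null_of_divergent_reciprocals
    (m : ℕ → ℕ) (hm : ∀ k, 0 < m k)
    (hdiv : ¬ Summable (fun k => 1 / (m k : ℝ))) :
    volume (closure {x : ℝ | x ∈ Set.Icc (0 : ℝ) 1 ∧ ∃ g : ℕ → ℕ, (∀ n, 0 < g n) ∧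
      x = bO1inf g ∧ ∀ n, g n ≤ m n}) = 0 := by
  set S := {x : ℝ | x ∈ Set.Icc (0 : ℝ) 1 ∧ ∃ g : ℕ → ℕ, (∀ n, 0 < g n) ∧
      x = bO1inf g ∧ ∀ n, g n ≤ m n} with hSdef
  set prodK : ℕ → ℝ := fun K => ∏ k ∈ Finset.range K, ((m k : ℝ) / (m k + 1)) with hprodK
  have hcover : ∀ K : ℕ, volume (closure S) ≤ ENNReal.ofReal (2 * prodK K) := by
    intro K
    set E : Set ℝ := ⋃ d ∈ DD m K, Metric.closedBall (PP d K) (LL d K) with hE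
    have hEclosed : IsClosed E :=
      Set.Finite.isClosed_biUnion (Finset.finite_toSet _)
        (fun d _ => Metric.isClosed_closedBall)
    have hSE : S ⊆ E := by
      rintro x ⟨hx01, g, hg, rfl, hgm⟩
      rw [hE]
      apply Set.mem_biUnion (trunc_mem_DD hg hgm K)
      rw [Metric.mem_closedBall, Real.dist_eq, PP_trunc g K, LL_trunc g K]
      exact dist_le hg K
    refine (measure_mono (closure_minimal hSE hEclosed)).trans ?_
    refine (measure_biUnion_finset_le _ _).trans ?_
    have h2 : ∀ d ∈ DD m K,
        volume (Metric.closedBall (PP d K) (LL d K)) = ENNReal.ofReal (2 * LL d K) := by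
      intro d _
      rw [Real.volume_closedBall]
    rw [Finset.sum_congr rfl h2,
      ← ENNReal.ofReal_sum_of_nonneg (fun d hd => by
        have := pprod_pos (DD_pos hm hd) K
        have := osig_nonneg (DD_pos hm hd) K
        unfold LL
        positivity)]
    apply ENNReal.ofReal_le_ofReal
    rw [← Finset.mul_sum]
    have := sum_LL_le hm K
    rw [hprodK]
    nlinarith [sum_LL_le hm K]
  -- divergence of ∑ 1/(m k + 1)
  have hdiv2 : ¬ Summable (fun k => 1 / ((m k : ℝ) + 1)) := by
    intro hsum
    apply hdiv
    apply Summable.of_nonneg_of_le (fun k => by positivity) (fun k => ?_) (hsum.mul_left 2)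
    have h1 : (1 : ℝ) ≤ (m k : ℝ) := by exact_mod_cast hm k
    have h2 : (0:ℝ) < (m k : ℝ) + 1 := by linarith
    rw [mul_one_div, div_le_div_iff₀ (by linarith) h2]
    nlinarith
  have hS0 : ∀ k, (0:ℝ) ≤ 1 / ((m k : ℝ) + 1) := fun k => by positivity
  have htends : Filter.Tendsto (fun n => ∑ i ∈ Finset.range n, 1 / ((m i : ℝ) + 1))
      Filter.atTop Filter.atTop :=
    (not_summable_iff_tendsto_nat_atTop_of_nonneg hS0).1 hdiv2
  have hexp : ∀ K, prodK K ≤ Real.exp (-(∑ i ∈ Finset.range K, 1 / ((m i : ℝ) + 1))) := by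
    intro K
    rw [hprodK, ← Finset.sum_neg_distrib, Real.exp_sum]
    apply Finset.prod_le_prod (fun k _ => by positivity)
    intro k _
    have h1 : (0:ℝ) < (m k : ℝ) + 1 := by positivity
    have heq : (m k : ℝ) / ((m k : ℝ) + 1) = 1 - 1 / ((m k : ℝ) + 1) := by
      field_simp
      ring
    rw [heq]
    have := Real.add_one_le_exp (-(1 / ((m k : ℝ) + 1)))
    linarith
  have hprod_tendsto : Filter.Tendsto (fun K => 2 * prodK K) Filter.atTop (nhds 0) := by
    have hexp_tendsto : Filter.Tendsto
        (fun K => 2 * Real.exp (-(∑ i ∈ Finset.range K, 1 / ((m i : ℝ) + 1))))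
        Filter.atTop (nhds 0) := by
      have h1 : Filter.Tendsto (fun K => -(∑ i ∈ Finset.range K, 1 / ((m i : ℝ) + 1)))
          Filter.atTop Filter.atBot := Filter.tendsto_neg_atBot_iff.2 htends
      have h2 := Real.tendsto_exp_atBot.comp h1
      have := h2.const_mul (2:ℝ)
      simpa using this
    apply squeeze_zero (fun K => ?_) (fun K => ?_) hexp_tendsto
    · have : (0:ℝ) ≤ prodK K := by
        rw [hprodK]; positivity
      linarith
    · have := hexp K
      linarith
  have hfinal : Filter.Tendsto (fun K => ENNReal.ofReal (2 * prodK K))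
      Filter.atTop (nhds 0) := by
    have := (ENNReal.continuous_ofReal.tendsto 0).comp hprod_tendsto
    simpa [Function.comp_def] using this
  have := ge_of_tendsto' hfinal hcover
  exact le_antisymm this zero_le
end

section
/- Let m be a fixed positive integer and V = ℕ \ {1,2,…,m} = {m+1, m+2, …}. Then the set C[V] of all x ∈ [0,1] with g_n(x) ∈ V for all n has positive Lebesgue measure; moreover λ(C[V]) > 1/(m+1)². -/
open MeasureTheory

namespace O1CV

/-- state after `n` digits, digits being `d i + m + 1` -/
def stm (m : ℕ) (d : ℕ → ℕ) (n : ℕ) : ℕ := ∑ i ∈ Finset.range n, (d i + m + 1)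

/-- product of the first `n` states -/
def qdm (m : ℕ) (d : ℕ → ℕ) (n : ℕ) : ℕ := ∏ j ∈ Finset.range n, stm m d (j + 1)

/-- partial sums of the series -/
noncomputable def pdm (m : ℕ) (d : ℕ → ℕ) (n : ℕ) : ℝ :=
  ∑ j ∈ Finset.range n, (-1 : ℝ) ^ j / (qdm m d (j + 1) : ℝ)

/-- normalized coordinate inside the rank-`n` cylinder -/
noncomputable def tcm (m : ℕ) (d : ℕ → ℕ) (n : ℕ) (x : ℝ) : ℝ :=
  (-1 : ℝ) ^ n * (qdm m d n : ℝ) * (x - pdm m d n)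

def KS (m : ℕ) (d : ℕ → ℕ) (n : ℕ) : Set ℝ :=
  {x | tcm m d n x ∈ Set.Icc (0:ℝ) (1 / ((stm m d n : ℝ) + m + 1))}

def GS (m : ℕ) (d : ℕ → ℕ) (n : ℕ) : Set ℝ :=
  {x | tcm m d n x ∈ Set.Ioc (1 / ((stm m d n : ℝ) + m + 1)) (1 / ((stm m d n : ℝ) + 1))}

def extf {n : ℕ} (f : Fin n → ℕ) : ℕ → ℕ := fun j => if h : j < n then f ⟨j, h⟩ else 0

def UU (m : ℕ) : Set ℝ := ⋃ p : (n : ℕ) × (Fin (n + 1) → ℕ), GS m (extf p.2) (p.1 + 1)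

def SS (m : ℕ) : Set ℝ :=
  {x : ℝ | x ∈ Set.Icc (0 : ℝ) 1 ∧ ∃ g : ℕ → ℕ, x = bO1inf g ∧ ∀ n, m < g n}

noncomputable def gE (m t : ℕ) : ENNReal :=
  ENNReal.ofReal (1 / ((t:ℝ) + 1) - 1 / ((t:ℝ) + m + 1))

noncomputable def wE (m t : ℕ) : ENNReal :=
  ENNReal.ofReal (2 * m / (((t:ℝ) + 1) * ((t:ℝ) + 2)))

noncomputable def ZE (m s : ℕ) : ENNReal :=
  ENNReal.ofReal ((m:ℝ) / (((s:ℝ) + m + 1) * ((s:ℝ) + m + 2)))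

noncomputable def WE (m : ℕ) : ℕ → ℕ → ENNReal
  | 0, _ => 0
  | (N+1), s => ∑' c : ℕ, (gE m (s + c + m + 1) + WE m N (s + c + m + 1)) /
      ((s + c + m + 1 : ℕ) : ENNReal)

noncomputable def gam (m n : ℕ) (e : ℕ → ℕ) (s : ℕ) : ENNReal :=
  gE m (s + stm m e (n + 1)) /
    ((∏ j ∈ Finset.range (n + 1), (s + stm m e (j + 1)) : ℕ) : ENNReal)

noncomputable def TnS (m n s : ℕ) : ENNReal := ∑' f : Fin (n + 1) → ℕ, gam m n (extf f) s

section lemmas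

variable {m : ℕ} {d e : ℕ → ℕ} {n : ℕ}

lemma stm_succ : stm m d (n+1) = stm m d n + (d n + m + 1) := by
  simp [stm, Finset.sum_range_succ]

lemma stm_zero : stm m d 0 = 0 := by simp [stm]

lemma le_stm_succ : m + 1 ≤ stm m d (n+1) := by
  rw [stm_succ]; omega

lemma stm_agree (h : ∀ i < n, d i = e i) {k : ℕ} (hk : k ≤ n) : stm m d k = stm m e k := by
  unfold stm; exact Finset.sum_congr rfl fun i hi => by
    rw [h i (lt_of_lt_of_le (Finset.mem_range.1 hi) hk)]

lemma qdm_succ : qdm m d (n+1) = qdm m d n * stm m d (n+1) := Finset.prod_range_succ _ _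

lemma qdm_zero : qdm m d 0 = 1 := rfl

lemma qdm_pos (hm : 1 ≤ m) : 0 < qdm m d n := by
  apply Finset.prod_pos; intro j _; have := @le_stm_succ m d j; omega

lemma two_pow_le_qdm (hm : 1 ≤ m) : 2 ^ n ≤ qdm m d n := by
  induction n with
  | zero => simp [qdm]
  | succ k ih =>
    rw [qdm_succ, pow_succ]
    exact Nat.mul_le_mul ih (by have := @le_stm_succ m d k; omega)

lemma qdm_agree (h : ∀ i < n, d i = e i) {k : ℕ} (hk : k ≤ n) : qdm m d k = qdm m e k := by
  unfold qdm; exact Finset.prod_congr rfl fun j hj => stm_agree h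
    (by have := Finset.mem_range.1 hj; omega)

lemma pdm_succ : pdm m d (n+1) = pdm m d n + (-1:ℝ)^n / (qdm m d (n+1) : ℝ) :=
  Finset.sum_range_succ _ _

lemma pdm_agree (h : ∀ i < n, d i = e i) {k : ℕ} (hk : k ≤ n) : pdm m d k = pdm m e k := by
  unfold pdm; exact Finset.sum_congr rfl fun j hj => by
    rw [qdm_agree h (by have := Finset.mem_range.1 hj; omega)]

lemma tcm_agree (h : ∀ i < n, d i = e i) (x : ℝ) : tcm m d n x = tcm m e n x := by
  unfold tcm; rw [qdm_agree h le_rfl, pdm_agree h le_rfl]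

end lemmas


section series

variable {m : ℕ} {d : ℕ → ℕ} {n : ℕ}

lemma qdmR_pos (hm : 1 ≤ m) : (0:ℝ) < (qdm m d n : ℝ) := by
  exact_mod_cast qdm_pos hm

lemma abs_term (hm : 1 ≤ m) (j : ℕ) :
    |(-1:ℝ)^j / (qdm m d (j+1) : ℝ)| ≤ (1/2) ^ j := by
  rw [abs_div, abs_pow, abs_neg, abs_one, one_pow, abs_of_pos (qdmR_pos hm)]
  rw [div_le_iff₀ (qdmR_pos hm)]
  have h : (2:ℝ)^(j+1) ≤ (qdm m d (j+1) : ℝ) := by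
    exact_mod_cast two_pow_le_qdm (d := d) hm
  have : (1:ℝ) ≤ (1/2)^j * 2^(j+1) := by
    have h2j : (0:ℝ) < 2^j := by positivity
    rw [div_pow, one_pow, pow_succ]
    rw [show (1:ℝ)/2^j * (2^j * 2) = 2 * ((2^j)⁻¹ * 2^j) by ring]
    rw [inv_mul_cancel₀ (ne_of_gt h2j)]; norm_num
  nlinarith [pow_pos (by norm_num : (0:ℝ) < 1/2) j, pow_pos (by norm_num : (0:ℝ) < 2) (j+1)]

lemma summable_term (hm : 1 ≤ m) :
    Summable (fun j : ℕ => (-1:ℝ)^j / (qdm m d (j+1) : ℝ)) := by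
  apply Summable.of_norm_bounded (g := fun j : ℕ => (1/2:ℝ)^j)
    (summable_geometric_of_lt_one (by norm_num) (by norm_num))
  intro j; exact abs_term hm j

lemma bO1_eq : bO1inf (fun i => d i + m + 1) = ∑' j : ℕ, (-1:ℝ)^j / (qdm m d (j+1) : ℝ) := by
  unfold bO1inf
  congr 1; funext j
  congr 1
  have h1 : ∀ k, osig (fun i => d i + m + 1) k = (stm m d k : ℝ) := by
    intro k; unfold osig stm; push_cast; ring
  rw [show (∏ k ∈ Finset.range (j+1), osig (fun i => d i + m + 1) (k+1))
      = (∏ k ∈ Finset.range (j+1), (stm m d (k+1) : ℝ)) from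
    Finset.prod_congr rfl fun k _ => h1 (k+1)]
  rw [qdm]; push_cast; ring

lemma qdm_ratio (hm : 1 ≤ m) (j : ℕ) :
    (qdm m d (n+1) : ℝ) * 2 ^ j ≤ (qdm m d (j+n+1) : ℝ) := by
  induction j with
  | zero => simp
  | succ k ih =>
    have h2 : (2:ℝ) ≤ (stm m d (k+n+2) : ℝ) := by
      have := @le_stm_succ m d (k+n+1); exact_mod_cast (by omega : 2 ≤ stm m d (k+n+1+1))
    have hq : qdm m d (k+n+2) = qdm m d (k+n+1) * stm m d (k+n+2) := qdm_succ
    have hqk : (0:ℝ) < (qdm m d (k+n+1) : ℝ) := qdmR_pos hm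
    calc (qdm m d (n+1) : ℝ) * 2 ^ (k+1) = ((qdm m d (n+1) : ℝ) * 2 ^ k) * 2 := by ring
    _ ≤ (qdm m d (k+n+1) : ℝ) * 2 := by nlinarith
    _ ≤ (qdm m d (k+n+1) : ℝ) * (stm m d (k+n+2) : ℝ) := by nlinarith
    _ = (qdm m d (k+n+2) : ℝ) := by rw [hq]; push_cast; ring
    _ = (qdm m d (k+1+n+1) : ℝ) := by norm_num [show k+n+2 = k+1+n+1 by omega]

lemma tail_bound (hm : 1 ≤ m) :
    |bO1inf (fun i => d i + m + 1) - pdm m d n| ≤ 2 / (qdm m d (n+1) : ℝ) := by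
  have hsum := summable_term (m := m) (d := d) hm
  have key := Summable.sum_add_tsum_nat_add (f := fun j : ℕ => (-1:ℝ)^j / (qdm m d (j+1) : ℝ)) n hsum
  rw [bO1_eq]
  have hpd : pdm m d n = ∑ j ∈ Finset.range n, (-1:ℝ)^j / (qdm m d (j+1) : ℝ) := rfl
  rw [hpd, ← key, add_sub_cancel_left]
  have hQ : (0:ℝ) < (qdm m d (n+1) : ℝ) := qdmR_pos hm
  have hb : ∀ j : ℕ, ‖(-1:ℝ)^(j+n) / (qdm m d (j+n+1) : ℝ)‖ ≤ (1 / (qdm m d (n+1):ℝ)) * (1/2)^j := by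
    intro j
    rw [Real.norm_eq_abs, abs_div, abs_pow, abs_neg, abs_one, one_pow, abs_of_pos (qdmR_pos hm)]
    have h := qdm_ratio (m := m) (d := d) (n := n) hm j
    rw [div_le_iff₀ (qdmR_pos hm), one_div, div_pow, one_pow, one_div]
    have h2j : (0:ℝ) < 2^j := by positivity
    rw [show (qdm m d (n+1):ℝ)⁻¹ * ((2:ℝ)^j)⁻¹ * (qdm m d (j+n+1):ℝ)
        = (qdm m d (j+n+1):ℝ) / ((qdm m d (n+1):ℝ) * 2^j) by field_simp]
    rw [le_div_iff₀ (by positivity)]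
    nlinarith
  have hsummb : Summable (fun j : ℕ => (1 / (qdm m d (n+1):ℝ)) * (1/2)^j) :=
    (summable_geometric_of_lt_one (by norm_num) (by norm_num)).mul_left _
  have hsum2 : Summable (fun j : ℕ => ‖(-1:ℝ)^(j+n) / (qdm m d (j+n+1) : ℝ)‖) := by
    apply Summable.of_nonneg_of_le (fun j => norm_nonneg _) hb hsummb
  calc |∑' j : ℕ, (-1:ℝ)^(j+n) / (qdm m d (j+n+1) : ℝ)|
      ≤ ∑' j : ℕ, ‖(-1:ℝ)^(j+n) / (qdm m d (j+n+1) : ℝ)‖ := norm_tsum_le_tsum_norm hsum2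
    _ ≤ ∑' j : ℕ, (1 / (qdm m d (n+1):ℝ)) * (1/2)^j := Summable.tsum_le_tsum hb hsum2 hsummb
    _ = (1 / (qdm m d (n+1):ℝ)) * 2 := by
        rw [tsum_mul_left, tsum_geometric_two]
    _ = 2 / (qdm m d (n+1) : ℝ) := by ring

end series


section ymem

variable {m : ℕ} {d : ℕ → ℕ} {n : ℕ}

lemma y_mem (hm : 1 ≤ m) : bO1inf (fun i => d i + m + 1) ∈ Set.Icc (0:ℝ) 1 := by
  have hb := tail_bound (m := m) (d := d) (n := 1) hm
  have hs1 : m + 1 ≤ stm m d 1 := le_stm_succ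
  have hs2 : 2 * (m + 1) ≤ stm m d 2 := by
    have h1 : m + 1 ≤ stm m d 1 := le_stm_succ
    have h2 : stm m d 2 = stm m d 1 + (d 1 + m + 1) := @stm_succ m d 1
    omega
  have hq1 : qdm m d 1 = stm m d 1 := by simp [qdm_succ, qdm_zero]
  have hq2 : qdm m d 2 = stm m d 1 * stm m d 2 := by
    rw [qdm_succ, hq1]
  have hpd1 : pdm m d 1 = 1 / (qdm m d 1 : ℝ) := by
    simp [pdm]
  have hS1 : (2:ℝ) ≤ (stm m d 1 : ℝ) := by exact_mod_cast (by omega : 2 ≤ stm m d 1)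
  have hS2 : (4:ℝ) ≤ (stm m d 2 : ℝ) := by exact_mod_cast (by omega : 4 ≤ stm m d 2)
  have hS1p : (0:ℝ) < (stm m d 1 : ℝ) := by linarith
  have hS2p : (0:ℝ) < (stm m d 2 : ℝ) := by linarith
  rw [hpd1, hq1] at hb
  rw [hq2] at hb
  push_cast at hb
  have habs := abs_le.1 hb
  constructor
  · have h2 : 2 / ((stm m d 1 : ℝ) * (stm m d 2 : ℝ)) ≤ 1 / (2 * (stm m d 1 : ℝ)) := by
      rw [div_le_div_iff₀ (by positivity) (by positivity)]
      nlinarith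
    have h3 : 1 / (2 * (stm m d 1 : ℝ)) ≤ 1 / (stm m d 1 : ℝ) - 1 / (2 * (stm m d 1 : ℝ)) := by
      rw [le_sub_iff_add_le]
      rw [show 1 / (2 * (stm m d 1:ℝ)) + 1 / (2 * (stm m d 1:ℝ)) = 1/(stm m d 1:ℝ) by
        field_simp; norm_num]
    nlinarith [habs.1]
  · have h2 : 2 / ((stm m d 1 : ℝ) * (stm m d 2 : ℝ)) ≤ 1 / (2 * (stm m d 1 : ℝ)) := by
      rw [div_le_div_iff₀ (by positivity) (by positivity)]
      nlinarith
    have h4 : 1 / (stm m d 1:ℝ) ≤ 1/2 := by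
      rw [div_le_div_iff₀ hS1p (by norm_num)]; linarith
    have h5 : 1 / (2 * (stm m d 1:ℝ)) ≤ 1/4 := by
      rw [div_le_div_iff₀ (by positivity) (by norm_num)]; linarith
    nlinarith [habs.2]

lemma exists_y (hm : 1 ≤ m) (d : ℕ → ℕ) (n : ℕ) :
    ∃ y ∈ SS m, |y - pdm m d n| ≤ 2 / (qdm m d (n+1) : ℝ) := by
  refine ⟨bO1inf (fun i => d i + m + 1), ⟨y_mem hm, fun i => d i + m + 1, rfl, fun k => by show m < d k + m + 1; omega⟩,
    tail_bound hm⟩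

end ymem


section covering

variable {m : ℕ} {d : ℕ → ℕ} {n : ℕ}

lemma tc_succ (x : ℝ) (hm : 1 ≤ m) :
    tcm m d (n+1) x = 1 - (stm m d (n+1) : ℝ) * tcm m d n x := by
  have hq : (qdm m d (n+1) : ℝ) ≠ 0 := ne_of_gt (qdmR_pos hm)
  have hqs : (qdm m d (n+1) : ℝ) = (qdm m d n : ℝ) * (stm m d (n+1) : ℝ) := by
    rw [qdm_succ]; push_cast; ring
  have he : ((-1:ℝ)^n) * ((-1:ℝ)^n) = 1 := by
    rw [← pow_add]; exact Even.neg_one_pow ⟨n, rfl⟩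
  have h2 : (-1:ℝ)^(n+1) * (qdm m d (n+1):ℝ) * ((-1:ℝ)^n/(qdm m d (n+1):ℝ)) = -1 := by
    rw [pow_succ, div_eq_mul_inv]
    rw [show (-1:ℝ)^n * -1 * (qdm m d (n+1):ℝ) * ((-1:ℝ)^n * ((qdm m d (n+1):ℝ))⁻¹)
        = -((((-1:ℝ)^n*(-1:ℝ)^n)) * ((qdm m d (n+1):ℝ) * ((qdm m d (n+1):ℝ))⁻¹)) by ring]
    rw [he, mul_inv_cancel₀ hq]; norm_num
  have expand : tcm m d (n+1) x
      = (-1:ℝ)^(n+1) * (qdm m d (n+1):ℝ) * (x - pdm m d n)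
        - ((-1:ℝ)^(n+1) * (qdm m d (n+1):ℝ) * ((-1:ℝ)^n/(qdm m d (n+1):ℝ))) := by
    unfold tcm; rw [pdm_succ]; ring
  rw [expand, h2, hqs]
  unfold tcm
  rw [pow_succ]
  ring

lemma tcm_zero_eq (x : ℝ) : tcm m d 0 x = x := by
  simp [tcm, qdm_zero, pdm]

lemma step (hm : 1 ≤ m) {x : ℝ} (hx : x ∈ KS m d n) (hne : tcm m d n x ≠ 0) :
    ∃ c : ℕ, tcm m (Function.update d n c) (n+1) x ∈
      Set.Icc (0:ℝ) (1 / ((stm m (Function.update d n c) (n+1) : ℝ) + 1)) := by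
  set t := tcm m d n x with ht
  obtain ⟨ht0, ht1⟩ := hx
  have htpos : 0 < t := lt_of_le_of_ne ht0 (Ne.symm hne)
  have hsm : (0:ℝ) < (stm m d n : ℝ) + m + 1 := by positivity
  have hinv : ((stm m d n : ℝ) + m + 1) ≤ 1 / t := by
    rw [le_div_iff₀ htpos]
    calc ((stm m d n : ℝ) + m + 1) * t ≤ ((stm m d n : ℝ) + m + 1) * (1/((stm m d n : ℝ) + m + 1)) := by
          apply mul_le_mul_of_nonneg_left ht1 (le_of_lt hsm)
      _ = 1 := by field_simp
  set σ := ⌊1/t⌋₊ with hσ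
  have hσge : stm m d n + m + 1 ≤ σ := by
    apply Nat.le_floor
    calc ((stm m d n + m + 1 : ℕ) : ℝ) = (stm m d n : ℝ) + m + 1 := by push_cast; ring
      _ ≤ 1/t := hinv
  refine ⟨σ - (stm m d n + m + 1), ?_⟩
  set d' := Function.update d n (σ - (stm m d n + m + 1)) with hd'
  have hagree : ∀ i < n, d i = d' i := fun i hi =>
    (Function.update_of_ne (Nat.ne_of_lt hi) _ d).symm
  have hstn : stm m d' n = stm m d n := (stm_agree (fun i hi => (hagree i hi).symm) le_rfl)
  have hstn1 : stm m d' (n+1) = σ := by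
    rw [stm_succ, hstn, hd', Function.update_self]
    omega
  have htc' : tcm m d' n x = t := tcm_agree (fun i hi => (hagree i hi).symm) x
  have hsucc : tcm m d' (n+1) x = 1 - (σ:ℝ) * t := by
    rw [tc_succ x hm, hstn1, htc']
  have hσpos : (0:ℝ) < (σ:ℝ) := by
    have : 1 ≤ σ := le_trans (by omega) hσge
    exact_mod_cast Nat.lt_of_lt_of_le Nat.zero_lt_one this
  have hfl : (σ:ℝ) ≤ 1/t := Nat.floor_le (by positivity)
  have hfl2 : 1/t < (σ:ℝ) + 1 := by
    have := Nat.lt_floor_add_one (1/t)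
    exact_mod_cast this
  rw [hsucc, hstn1]
  constructor
  · have : (σ:ℝ) * t ≤ 1 := by
      rw [← le_div_iff₀ htpos]; exact hfl
    linarith
  · rw [le_div_iff₀ (by positivity)]
    have h1 : 1 < ((σ:ℝ) + 1) * t := by
      rw [← div_lt_iff₀ htpos]; exact hfl2
    nlinarith

lemma KS_zero (hm : 1 ≤ m) {x : ℝ} (hx : x ∈ Set.Icc (0:ℝ) (1/((m:ℝ)+1))) :
    x ∈ KS m d 0 := by
  constructor <;> rw [tcm_zero_eq] <;>
    [exact hx.1; · rw [stm_zero]; simpa using hx.2]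

lemma reach (hm : 1 ≤ m) {x : ℝ} (hx : x ∈ Set.Icc (0:ℝ) (1/((m:ℝ)+1)))
    (hU : x ∉ UU m) (N : ℕ) :
    (∃ d : ℕ → ℕ, x ∈ KS m d N) ∨ (∃ (d : ℕ → ℕ) (n : ℕ), x = pdm m d n) := by
  induction N with
  | zero => exact Or.inl ⟨fun _ => 0, KS_zero hm hx⟩
  | succ N ih =>
    rcases ih with ⟨d, hK⟩ | hr
    · by_cases hxp : x = pdm m d N
      · exact Or.inr ⟨d, N, hxp⟩
      · have hne : tcm m d N x ≠ 0 := by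
          unfold tcm
          intro h
          rcases mul_eq_zero.1 h with h1 | h2
          · rcases mul_eq_zero.1 h1 with h3 | h4
            · exact absurd h3 (by positivity)
            · exact absurd h4 (ne_of_gt (qdmR_pos hm))
          · exact hxp (by linarith [sub_eq_zero.1 h2])
        obtain ⟨c, hc⟩ := step hm hK hne
        set d' := Function.update d N c with hd'
        left
        refine ⟨d', ?_⟩
        have hnotG : x ∉ GS m d' (N+1) := by
          intro hG
          apply hU
          refine Set.mem_iUnion.2 ⟨⟨N, fun i : Fin (N+1) => d' i⟩, ?_⟩
          have hag : ∀ i < N+1, extf (fun i : Fin (N+1) => d' i) i = d' i := by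
            intro i hi; simp [extf, hi]
          show tcm m (extf fun i : Fin (N+1) => d' i) (N+1) x ∈ Set.Ioc _ _
          rw [stm_agree hag le_rfl, tcm_agree hag x]
          exact hG
        constructor
        · exact hc.1
        · by_contra hgt
          push_neg at hgt
          exact hnotG ⟨hgt, hc.2⟩
    · exact Or.inr hr

lemma dist_pdm (hm : 1 ≤ m) {x : ℝ} (hK : x ∈ KS m d n) :
    |x - pdm m d n| ≤ 1 / (qdm m d n : ℝ) := by
  obtain ⟨h0, h1⟩ := hK
  have hq : (0:ℝ) < (qdm m d n : ℝ) := qdmR_pos hm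
  have hm1 : (1:ℝ) ≤ (m:ℝ) := Nat.one_le_cast.2 hm
  have habs : |tcm m d n x| ≤ 1 := by
    rw [abs_le]
    refine ⟨by linarith, le_trans h1 ?_⟩
    rw [div_le_one (by positivity)]
    have : (0:ℝ) ≤ (stm m d n : ℝ) := Nat.cast_nonneg _
    linarith
  have heq : |tcm m d n x| = (qdm m d n : ℝ) * |x - pdm m d n| := by
    unfold tcm
    rw [abs_mul, abs_mul, abs_pow, abs_neg, abs_one, one_pow, one_mul, abs_of_pos hq]
  rw [heq] at habs
  rw [le_div_iff₀ hq, mul_comm]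
  exact habs

lemma closure_mem (hm : 1 ≤ m) {x : ℝ} (hx : x ∈ Set.Icc (0:ℝ) (1/((m:ℝ)+1)))
    (hU : x ∉ UU m) : x ∈ closure (SS m) := by
  rw [Metric.mem_closure_iff]
  intro ε hε
  obtain ⟨N, hN⟩ := exists_pow_lt_of_lt_one (x := ε/4) (y := (1/2:ℝ)) (by positivity) (by norm_num)
  rcases reach hm hx hU N with ⟨d, hK⟩ | ⟨d, n, hxp⟩
  · obtain ⟨y, hyS, hy⟩ := exists_y hm d N
    refine ⟨y, hyS, ?_⟩
    have h1 : |x - pdm m d N| ≤ 1 / (qdm m d N : ℝ) := dist_pdm hm hK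
    have hq : (0:ℝ) < (qdm m d N : ℝ) := qdmR_pos hm
    have hq1 : (0:ℝ) < (qdm m d (N+1) : ℝ) := qdmR_pos hm
    have hrat : 2 / (qdm m d (N+1) : ℝ) ≤ 1 / (qdm m d N : ℝ) := by
      rw [div_le_div_iff₀ hq1 hq]
      have : qdm m d (N+1) = qdm m d N * stm m d (N+1) := qdm_succ
      have h2 : (2:ℝ) ≤ (stm m d (N+1):ℝ) := by
        exact_mod_cast (by have := @le_stm_succ m d N; omega : 2 ≤ stm m d (N+1))
      rw [this]
      push_cast
      nlinarith
    have hgeom : 1 / (qdm m d N : ℝ) ≤ (1/2)^N := by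
      rw [div_le_iff₀ hq]
      have h : (2:ℝ)^N ≤ (qdm m d N : ℝ) := by exact_mod_cast two_pow_le_qdm (d := d) hm
      have h2 : (0:ℝ) < (2:ℝ)^N := by positivity
      calc (1:ℝ) = (1/2)^N * 2^N := by
            rw [div_pow, one_pow, div_mul_cancel₀]; positivity
        _ ≤ (1/2)^N * (qdm m d N:ℝ) := by
            apply mul_le_mul_of_nonneg_left h (by positivity)
    rw [Real.dist_eq]
    calc |x - y| ≤ |x - pdm m d N| + |y - pdm m d N| := by
          rw [show x - y = (x - pdm m d N) - (y - pdm m d N) by ring]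
          exact abs_sub _ _
      _ ≤ 1 / (qdm m d N : ℝ) + 2 / (qdm m d (N+1) : ℝ) := add_le_add h1 hy
      _ ≤ (1/2)^N + (1/2)^N := add_le_add hgeom (le_trans hrat hgeom)
      _ < ε := by nlinarith [hN]
  · obtain ⟨M, hM⟩ := exists_nat_gt (4/ε)
    set d' := Function.update d n M with hd'
    have hagree : ∀ i < n, d' i = d i := fun i hi =>
      Function.update_of_ne (Nat.ne_of_lt hi) _ d
    obtain ⟨y, hyS, hy⟩ := exists_y hm d' n
    refine ⟨y, hyS, ?_⟩
    have hpd : pdm m d' n = pdm m d n := pdm_agree hagree le_rfl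
    have hqM : (M:ℝ) ≤ (qdm m d' (n+1) : ℝ) := by
      have h1 : qdm m d' (n+1) = qdm m d' n * stm m d' (n+1) := qdm_succ
      have h2 : stm m d' (n+1) = stm m d' n + (M + m + 1) := by
        rw [stm_succ, hd', Function.update_self]
      have h3 : 1 ≤ qdm m d' n := qdm_pos hm
      have : M ≤ qdm m d' (n+1) := by
        rw [h1, h2]; nlinarith
      exact_mod_cast this
    have hMpos : (0:ℝ) < M := lt_trans (by positivity) hM
    rw [Real.dist_eq, hxp, ← hpd]
    calc |pdm m d' n - y| = |y - pdm m d' n| := abs_sub_comm _ _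
      _ ≤ 2 / (qdm m d' (n+1) : ℝ) := hy
      _ ≤ 2 / (M:ℝ) := by
          apply div_le_div_of_nonneg_left (by norm_num) hMpos hqM
      _ < ε := by
          rw [div_lt_iff₀ hMpos]
          rw [div_lt_iff₀ hε] at hM
          nlinarith

end covering


section measure1

variable {m : ℕ} {d : ℕ → ℕ} {n : ℕ}

lemma GS_rep (hm : 1 ≤ m) (d : ℕ → ℕ) (n : ℕ) : ∃ a b : ℝ,
    (GS m d n = Set.Ioc a b ∨ GS m d n = Set.Ico a b) ∧
    b - a = (1 / ((stm m d n : ℝ) + 1) - 1 / ((stm m d n : ℝ) + m + 1)) / (qdm m d n : ℝ) := by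
  have hQ0 : (0:ℝ) < (qdm m d n : ℝ) := qdmR_pos hm
  rcases Nat.even_or_odd n with he | ho
  · refine ⟨pdm m d n + (1 / ((stm m d n : ℝ) + m + 1)) / (qdm m d n : ℝ),
      pdm m d n + (1 / ((stm m d n : ℝ) + 1)) / (qdm m d n : ℝ), Or.inl ?_, by ring⟩
    have hpow : (-1:ℝ)^n = 1 := he.neg_one_pow
    ext z
    simp only [GS, Set.mem_setOf_eq, Set.mem_Ioc, tcm, hpow, one_mul]
    constructor
    · rintro ⟨hz1, hz2⟩
      constructor
      · have h : (1 / ((stm m d n : ℝ) + m + 1)) / (qdm m d n : ℝ) < z - pdm m d n :=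
          (div_lt_iff₀ hQ0).2 (by nlinarith)
        linarith
      · have h : z - pdm m d n ≤ (1 / ((stm m d n : ℝ) + 1)) / (qdm m d n : ℝ) :=
          (le_div_iff₀ hQ0).2 (by nlinarith)
        linarith
    · rintro ⟨hz1, hz2⟩
      constructor
      · have h : (1 / ((stm m d n : ℝ) + m + 1)) / (qdm m d n : ℝ) < z - pdm m d n := by
          linarith
        have := (div_lt_iff₀ hQ0).1 h
        nlinarith
      · have h : z - pdm m d n ≤ (1 / ((stm m d n : ℝ) + 1)) / (qdm m d n : ℝ) := by
          linarith
        have := (le_div_iff₀ hQ0).1 h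
        nlinarith
  · refine ⟨pdm m d n - (1 / ((stm m d n : ℝ) + 1)) / (qdm m d n : ℝ),
      pdm m d n - (1 / ((stm m d n : ℝ) + m + 1)) / (qdm m d n : ℝ), Or.inr ?_, by ring⟩
    have hpow : (-1:ℝ)^n = -1 := ho.neg_one_pow
    ext z
    simp only [GS, Set.mem_setOf_eq, Set.mem_Ico, Set.mem_Ioc, tcm, hpow]
    constructor
    · rintro ⟨hz1, hz2⟩
      constructor
      · have h : pdm m d n - z ≤ (1 / ((stm m d n : ℝ) + 1)) / (qdm m d n : ℝ) :=
          (le_div_iff₀ hQ0).2 (by nlinarith)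
        linarith
      · have h : (1 / ((stm m d n : ℝ) + m + 1)) / (qdm m d n : ℝ) < pdm m d n - z :=
          (div_lt_iff₀ hQ0).2 (by nlinarith)
        linarith
    · rintro ⟨hz1, hz2⟩
      constructor
      · have h : (1 / ((stm m d n : ℝ) + m + 1)) / (qdm m d n : ℝ) < pdm m d n - z := by
          linarith
        have := (div_lt_iff₀ hQ0).1 h
        nlinarith
      · have h : pdm m d n - z ≤ (1 / ((stm m d n : ℝ) + 1)) / (qdm m d n : ℝ) := by
          linarith
        have := (le_div_iff₀ hQ0).1 h
        nlinarith

lemma GS_measurable (hm : 1 ≤ m) (d : ℕ → ℕ) (n : ℕ) : MeasurableSet (GS m d n) := by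
  obtain ⟨a, b, hab, -⟩ := GS_rep hm d n
  rcases hab with h | h <;> rw [h]
  · exact measurableSet_Ioc
  · exact measurableSet_Ico

lemma GS_volume (hm : 1 ≤ m) (d : ℕ → ℕ) (n : ℕ) :
    volume (GS m d n) = ENNReal.ofReal
      ((1 / ((stm m d n : ℝ) + 1) - 1 / ((stm m d n : ℝ) + m + 1)) / (qdm m d n : ℝ)) := by
  obtain ⟨a, b, hab, hlen⟩ := GS_rep hm d n
  rcases hab with h | h <;> rw [h]
  · rw [Real.volume_Ioc, hlen]
  · rw [Real.volume_Ico, hlen]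

end measure1


section telescope

variable {m : ℕ}

lemma tel_real (a : ℕ) (ha : 1 ≤ a) :
    HasSum (fun c : ℕ => 2 / (((a:ℝ)+c) * ((a:ℝ)+c+1) * ((a:ℝ)+c+2)))
      (1/((a:ℝ)*((a:ℝ)+1))) := by
  set b : ℕ → ℝ := fun c => 1 / (((a:ℝ)+c) * ((a:ℝ)+c+1)) with hbdef
  have haR : (1:ℝ) ≤ (a:ℝ) := Nat.one_le_cast.2 ha
  have hden : ∀ c : ℕ, (0:ℝ) < ((a:ℝ)+c) ∧ (0:ℝ) < ((a:ℝ)+c+1) ∧ (0:ℝ) < ((a:ℝ)+c+2) := by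
    intro c
    have : (0:ℝ) ≤ (c:ℝ) := Nat.cast_nonneg _
    refine ⟨by linarith, by linarith, by linarith⟩
  have hb : ∀ c : ℕ, b c - b (c+1) = 2 / (((a:ℝ)+c) * ((a:ℝ)+c+1) * ((a:ℝ)+c+2)) := by
    intro c
    obtain ⟨h1, h2, h3⟩ := hden c
    have hc1 : ((a:ℝ)+(c+1:ℕ)) = (a:ℝ)+c+1 := by push_cast; ring
    have hc2 : ((a:ℝ)+(c+1:ℕ)+1) = (a:ℝ)+c+2 := by push_cast; ring
    rw [hbdef]
    simp only [hc1, hc2]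
    field_simp
    ring
  have hnn : ∀ c : ℕ, (0:ℝ) ≤ 2 / (((a:ℝ)+c) * ((a:ℝ)+c+1) * ((a:ℝ)+c+2)) := by
    intro c
    obtain ⟨h1, h2, h3⟩ := hden c
    positivity
  have hbnn : ∀ c : ℕ, (0:ℝ) ≤ b c := by
    intro c
    obtain ⟨h1, h2, _⟩ := hden c
    rw [hbdef]
    positivity
  have hpartial : ∀ N : ℕ, ∑ i ∈ Finset.range N, 2 / (((a:ℝ)+i) * ((a:ℝ)+i+1) * ((a:ℝ)+i+2))
      = b 0 - b N := by
    intro N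
    rw [← Finset.sum_range_sub' b N]
    exact Finset.sum_congr rfl fun i _ => (hb i).symm
  have hsummable : Summable (fun c : ℕ => 2 / (((a:ℝ)+c) * ((a:ℝ)+c+1) * ((a:ℝ)+c+2))) := by
    apply summable_of_sum_range_le hnn (c := b 0)
    intro N
    rw [hpartial N]
    linarith [hbnn N]
  have hbtend : Filter.Tendsto b Filter.atTop (nhds 0) := by
    apply squeeze_zero hbnn (g := fun N : ℕ => 1/((N:ℝ)+1))
    · intro N
      obtain ⟨h1, h2, _⟩ := hden N
      rw [hbdef]
      have hNc : (0:ℝ) ≤ (N:ℝ) := Nat.cast_nonneg _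
      apply div_le_div_of_nonneg_left (by norm_num) (by linarith) (by nlinarith)
    · exact tendsto_one_div_add_atTop_nhds_zero_nat
  have htend : Filter.Tendsto
      (fun N => ∑ i ∈ Finset.range N, 2 / (((a:ℝ)+i) * ((a:ℝ)+i+1) * ((a:ℝ)+i+2)))
      Filter.atTop (nhds (b 0)) := by
    simp only [hpartial]
    simpa using Filter.Tendsto.const_sub (b 0) hbtend
  have hts := hsummable.hasSum.tendsto_sum_nat
  have : (∑' c : ℕ, 2 / (((a:ℝ)+c) * ((a:ℝ)+c+1) * ((a:ℝ)+c+2))) = b 0 :=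
    tendsto_nhds_unique hts htend
  have hb0 : b 0 = 1/((a:ℝ)*((a:ℝ)+1)) := by rw [hbdef]; norm_num
  rw [← hb0, ← this]
  exact hsummable.hasSum

lemma tel_E (hm : 1 ≤ m) (s : ℕ) :
    ∑' c : ℕ, wE m (s+c+m+1) / ((s+c+m+1 : ℕ) : ENNReal) = ZE m s := by
  set a : ℕ := s + m + 1 with hadef
  have ha : 1 ≤ a := by omega
  have haR : (1:ℝ) ≤ (a:ℝ) := Nat.one_le_cast.2 ha
  have hsum0 := (tel_real a ha).mul_left (m:ℝ)
  set f : ℕ → ℝ := fun c => (m:ℝ) * (2 / (((a:ℝ)+c) * ((a:ℝ)+c+1) * ((a:ℝ)+c+2))) with hf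
  have hnn : ∀ c, 0 ≤ f c := by
    intro c
    have h0 : (0:ℝ) ≤ (c:ℝ) := Nat.cast_nonneg _
    have h1 : (0:ℝ) ≤ (m:ℝ) := Nat.cast_nonneg _
    rw [hf]
    have e1 : (0:ℝ) < (a:ℝ)+c := by linarith
    have e2 : (0:ℝ) < (a:ℝ)+c+1 := by linarith
    have e3 : (0:ℝ) < (a:ℝ)+c+2 := by linarith
    positivity
  have hterm : ∀ c : ℕ, wE m (s+c+m+1) / ((s+c+m+1 : ℕ) : ENNReal) = ENNReal.ofReal (f c) := by
    intro c
    have hcast : ((s+c+m+1 : ℕ) : ℝ) = (a:ℝ) + c := by rw [hadef]; push_cast; ring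
    have hpos : (0:ℝ) < ((s+c+m+1 : ℕ) : ℝ) := by rw [hcast]; have : (0:ℝ) ≤ (c:ℝ) := Nat.cast_nonneg _; linarith
    have h0 : (0:ℝ) ≤ (c:ℝ) := Nat.cast_nonneg _
    rw [wE, show ((s+c+m+1:ℕ) : ENNReal) = ENNReal.ofReal ((s+c+m+1:ℕ):ℝ) from (ENNReal.ofReal_natCast _).symm]
    rw [← ENNReal.ofReal_div_of_pos hpos]
    congr 1
    rw [hcast, hf]
    have d1 : (0:ℝ) < (a:ℝ)+c := by linarith
    have d2 : (0:ℝ) < (a:ℝ)+c+1 := by linarith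
    have d3 : (0:ℝ) < (a:ℝ)+c+2 := by linarith
    field_simp
  calc ∑' c : ℕ, wE m (s+c+m+1) / ((s+c+m+1 : ℕ) : ENNReal)
      = ∑' c : ℕ, ENNReal.ofReal (f c) := by
        exact tsum_congr hterm
    _ = ENNReal.ofReal (∑' c : ℕ, f c) := (ENNReal.ofReal_tsum_of_nonneg hnn hsum0.summable).symm
    _ = ENNReal.ofReal ((m:ℝ) * (1/((a:ℝ)*((a:ℝ)+1)))) := by rw [hsum0.tsum_eq]
    _ = ZE m s := by
        rw [ZE]
        have h1 : ((s:ℝ) + m + 1) = (a:ℝ) := by rw [hadef]; push_cast; ring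
        have h2 : ((s:ℝ) + m + 2) = (a:ℝ) + 1 := by rw [hadef]; push_cast; ring
        rw [h1, h2, mul_one_div]

lemma key_ineq (hm : 1 ≤ m) (t : ℕ) : gE m t + ZE m t ≤ wE m t := by
  have htR : (0:ℝ) ≤ (t:ℝ) := Nat.cast_nonneg _
  have hmR : (1:ℝ) ≤ (m:ℝ) := Nat.one_le_cast.2 hm
  have d1 : (0:ℝ) < (t:ℝ)+1 := by linarith
  have d2 : (0:ℝ) < (t:ℝ)+2 := by linarith
  have d3 : (0:ℝ) < (t:ℝ)+m+1 := by linarith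
  have d4 : (0:ℝ) < (t:ℝ)+m+2 := by linarith
  have hA : 1 / ((t:ℝ) + 1) - 1 / ((t:ℝ) + m + 1) = (m:ℝ) / (((t:ℝ)+1) * ((t:ℝ)+m+1)) := by
    rw [div_sub_div _ _ (ne_of_gt d1) (ne_of_gt d3)]
    congr 1
    ring
  have hBnn : (0:ℝ) ≤ (m:ℝ) / (((t:ℝ)+m+1) * ((t:ℝ)+m+2)) := by positivity
  rw [gE, ZE, ← ENNReal.ofReal_add (by rw [hA]; positivity) hBnn]
  apply ENNReal.ofReal_le_ofReal
  rw [hA]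
  have h2 : (m:ℝ) / (((t:ℝ)+1) * ((t:ℝ)+m+1)) ≤ (m:ℝ) / (((t:ℝ)+1) * ((t:ℝ)+2)) := by
    apply div_le_div_of_nonneg_left (by linarith) (by positivity) (by nlinarith)
  have h3 : (m:ℝ) / (((t:ℝ)+m+1) * ((t:ℝ)+m+2)) ≤ (m:ℝ) / (((t:ℝ)+1) * ((t:ℝ)+2)) := by
    apply div_le_div_of_nonneg_left (by linarith) (by positivity) (by nlinarith)
  have hw : 2 * (m:ℝ) / (((t:ℝ) + 1) * ((t:ℝ) + 2))
      = (m:ℝ) / (((t:ℝ)+1) * ((t:ℝ)+2)) + (m:ℝ) / (((t:ℝ)+1) * ((t:ℝ)+2)) := by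
    ring
  rw [hw]
  linarith

lemma gE_le_wE (hm : 1 ≤ m) (t : ℕ) : gE m t ≤ wE m t :=
  le_trans (le_add_right le_rfl) (key_ineq hm t)

lemma WE_le (hm : 1 ≤ m) : ∀ N s, WE m N s ≤ ZE m s := by
  intro N
  induction N with
  | zero => intro s; rw [WE]; exact bot_le
  | succ N ih =>
    intro s
    rw [WE]
    calc ∑' c : ℕ, (gE m (s + c + m + 1) + WE m N (s + c + m + 1)) / ((s + c + m + 1 : ℕ) : ENNReal)
        ≤ ∑' c : ℕ, wE m (s + c + m + 1) / ((s + c + m + 1 : ℕ) : ENNReal) := by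
          apply ENNReal.tsum_le_tsum
          intro c
          apply ENNReal.div_le_div_right
          calc gE m (s + c + m + 1) + WE m N (s + c + m + 1)
              ≤ gE m (s + c + m + 1) + ZE m (s + c + m + 1) := add_le_add_right (ih _) _
            _ ≤ wE m (s + c + m + 1) := key_ineq hm _
      _ = ZE m s := tel_E hm s

end telescope


section gamsec

variable {m : ℕ}

lemma gam_congr {n : ℕ} {e e' : ℕ → ℕ} (s : ℕ) (h : ∀ i < n+1, e i = e' i) :
    gam m n e s = gam m n e' s := by
  unfold gam
  rw [stm_agree h le_rfl]
  congr 2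
  apply Finset.prod_congr rfl
  intro j hj
  rw [stm_agree h (by have := Finset.mem_range.1 hj; omega)]

lemma stm_shift (e : ℕ → ℕ) (k : ℕ) :
    stm m e (k+1) = stm m (fun i => e (i+1)) k + (e 0 + m + 1) := by
  unfold stm
  rw [Finset.sum_range_succ']

lemma gam_peel (n : ℕ) (e : ℕ → ℕ) (s : ℕ) :
    gam m (n+1) e s = gam m n (fun i => e (i+1)) (s + e 0 + m + 1) /
      ((s + e 0 + m + 1 : ℕ) : ENNReal) := by
  have hkey : ∀ k : ℕ, s + stm m e (k+1) = (s + e 0 + m + 1) + stm m (fun i => e (i+1)) k := by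
    intro k
    rw [stm_shift]
    omega
  have hst1 : stm m e 1 = e 0 + m + 1 := by
    unfold stm
    rw [Finset.sum_range_one]
  have hnum : s + stm m e (n+2) = (s + e 0 + m + 1) + stm m (fun i => e (i+1)) (n+1) := hkey (n+1)
  have hden : (∏ j ∈ Finset.range (n+2), (s + stm m e (j+1)))
      = (∏ j ∈ Finset.range (n+1), ((s + e 0 + m + 1) + stm m (fun i => e (i+1)) (j+1)))
        * (s + e 0 + m + 1) := by
    rw [Finset.prod_range_succ']
    congr 1
    · apply Finset.prod_congr rfl
      intro j _
      exact hkey (j+1)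
    · rw [hst1]; omega
  unfold gam
  rw [hnum, hden]
  have hc : (((∏ j ∈ Finset.range (n+1), ((s + e 0 + m + 1) + stm m (fun i => e (i+1)) (j+1)))
      * (s + e 0 + m + 1) : ℕ) : ENNReal)
      = ((∏ j ∈ Finset.range (n+1), ((s + e 0 + m + 1) + stm m (fun i => e (i+1)) (j+1)) : ℕ) : ENNReal)
        * ((s + e 0 + m + 1 : ℕ) : ENNReal) := by push_cast; ring
  rw [hc]
  rw [div_eq_mul_inv, div_eq_mul_inv, div_eq_mul_inv]
  rw [ENNReal.mul_inv (Or.inr (ENNReal.natCast_ne_top _)) (Or.inl (ENNReal.natCast_ne_top _))]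
  ring

lemma extf_cons_zero {n : ℕ} (c : ℕ) (f : Fin (n+1) → ℕ) :
    extf (Fin.cons c f : Fin (n+2) → ℕ) 0 = c := by
  simp [extf]

lemma extf_cons_succ {n : ℕ} (c : ℕ) (f : Fin (n+1) → ℕ) (i : ℕ) (hi : i < n+1) :
    extf (Fin.cons c f : Fin (n+2) → ℕ) (i+1) = extf f i := by
  simp only [extf, dif_pos hi, dif_pos (by omega : i+1 < n+2)]
  exact Fin.cons_succ (α := fun _ : Fin (n+2) => ℕ) c f ⟨i, hi⟩

lemma Tn_zero (s : ℕ) : TnS m 0 s = ∑' c : ℕ, gE m (s+c+m+1) / ((s+c+m+1 : ℕ) : ENNReal) := by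
  unfold TnS
  rw [← Equiv.tsum_eq (Equiv.funUnique (Fin 1) ℕ).symm (fun f => gam m 0 (extf f) s)]
  apply tsum_congr
  intro c
  have h1 : extf ((Equiv.funUnique (Fin 1) ℕ).symm c) 0 = c := by
    simp [extf, Equiv.funUnique]
  unfold gam
  rw [Finset.prod_range_one]
  have h2 : stm m (extf ((Equiv.funUnique (Fin 1) ℕ).symm c)) 1
      = c + m + 1 := by
    unfold stm
    rw [Finset.sum_range_one, h1]
  rw [h2]
  norm_num [show s + (c + m + 1) = s + c + m + 1 by omega]

lemma Tn_succ (n s : ℕ) :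
    TnS m (n+1) s = ∑' c : ℕ, TnS m n (s+c+m+1) / ((s+c+m+1 : ℕ) : ENNReal) := by
  unfold TnS
  rw [← Equiv.tsum_eq (Fin.consEquiv (fun _ : Fin (n+2) => ℕ))
    (fun f => gam m (n+1) (extf f) s)]
  rw [ENNReal.tsum_prod']
  apply tsum_congr
  intro c
  rw [div_eq_mul_inv, ← ENNReal.tsum_mul_right]
  apply tsum_congr
  intro f
  have hc : (Fin.consEquiv (fun _ : Fin (n+2) => ℕ)) (c, f) = Fin.cons c f := rfl
  rw [hc, gam_peel, extf_cons_zero]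
  rw [gam_congr (s + c + m + 1) (fun i hi => extf_cons_succ c f i hi)]
  rw [div_eq_mul_inv]

lemma sum_Tn_le (hm : 1 ≤ m) : ∀ N s, (∑ n ∈ Finset.range N, TnS m n s) ≤ WE m N s := by
  intro N
  induction N with
  | zero => intro s; simp [WE]
  | succ N ih =>
    intro s
    rw [Finset.sum_range_succ']
    calc (∑ n ∈ Finset.range N, TnS m (n+1) s) + TnS m 0 s
        = (∑ n ∈ Finset.range N, ∑' c : ℕ, TnS m n (s+c+m+1) / ((s+c+m+1 : ℕ) : ENNReal))
          + ∑' c : ℕ, gE m (s+c+m+1) / ((s+c+m+1 : ℕ) : ENNReal) := by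
          rw [Tn_zero]
          congr 1
          exact Finset.sum_congr rfl fun n _ => Tn_succ n s
      _ = (∑' c : ℕ, ∑ n ∈ Finset.range N, TnS m n (s+c+m+1) / ((s+c+m+1 : ℕ) : ENNReal))
          + ∑' c : ℕ, gE m (s+c+m+1) / ((s+c+m+1 : ℕ) : ENNReal) := by
          congr 1
          exact (Summable.tsum_finsetSum (fun n _ => ENNReal.summable)).symm
      _ = ∑' c : ℕ, (gE m (s+c+m+1) / ((s+c+m+1 : ℕ) : ENNReal)
          + ∑ n ∈ Finset.range N, TnS m n (s+c+m+1) / ((s+c+m+1 : ℕ) : ENNReal)) := by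
          rw [ENNReal.tsum_add]
          rw [add_comm]
      _ ≤ ∑' c : ℕ, (gE m (s+c+m+1) + WE m N (s+c+m+1)) / ((s+c+m+1 : ℕ) : ENNReal) := by
          apply ENNReal.tsum_le_tsum
          intro c
          rw [ENNReal.add_div]
          apply add_le_add_right
          have hsum : (∑ n ∈ Finset.range N, TnS m n (s+c+m+1) / ((s+c+m+1 : ℕ) : ENNReal))
              = (∑ n ∈ Finset.range N, TnS m n (s+c+m+1)) / ((s+c+m+1 : ℕ) : ENNReal) := by
            rw [div_eq_mul_inv, Finset.sum_mul]
            exact Finset.sum_congr rfl fun n _ => (div_eq_mul_inv _ _)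
          rw [hsum]
          exact ENNReal.div_le_div_right (ih _) _
      _ = WE m (N+1) s := by rw [WE]

lemma vol_GS_gam (hm : 1 ≤ m) (n : ℕ) (f : Fin (n+1) → ℕ) :
    volume (GS m (extf f) (n+1)) = gam m n (extf f) 0 := by
  rw [GS_volume hm]
  unfold gam
  have hz : ∀ j : ℕ, 0 + stm m (extf f) (j+1) = stm m (extf f) (j+1) := fun j => by omega
  rw [hz]
  have hprod : (∏ j ∈ Finset.range (n+1), (0 + stm m (extf f) (j+1))) = qdm m (extf f) (n+1) := by
    unfold qdm
    exact Finset.prod_congr rfl fun j _ => by omega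
  rw [hprod]
  rw [gE]
  have hQpos : (0:ℝ) < (qdm m (extf f) (n+1) : ℝ) := qdmR_pos hm
  rw [ENNReal.ofReal_div_of_pos hQpos, ENNReal.ofReal_natCast]

lemma vol_UU (hm : 1 ≤ m) : volume (UU m) ≤ ZE m 0 := by
  calc volume (UU m)
      ≤ ∑' p : (n : ℕ) × (Fin (n + 1) → ℕ), volume (GS m (extf p.2) (p.1+1)) :=
        measure_iUnion_le _
    _ = ∑' n : ℕ, ∑' f : Fin (n+1) → ℕ, volume (GS m (extf f) (n+1)) :=
        ENNReal.tsum_sigma' _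
    _ = ∑' n : ℕ, TnS m n 0 := by
        apply tsum_congr
        intro n
        unfold TnS
        exact tsum_congr fun f => vol_GS_gam hm n f
    _ ≤ ZE m 0 := by
        apply Summable.tsum_le_of_sum_le ENNReal.summable
        intro F
        obtain ⟨N, hN⟩ := F.exists_nat_subset_range
        calc ∑ n ∈ F, TnS m n 0 ≤ ∑ n ∈ Finset.range N, TnS m n 0 :=
              Finset.sum_le_sum_of_subset hN
          _ ≤ WE m N 0 := sum_Tn_le hm N 0
          _ ≤ ZE m 0 := WE_le hm N 0

end gamsec


section final

lemma volume_lower (m : ℕ) (hm1 : 1 ≤ m) :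
    ENNReal.ofReal (2/(((m:ℝ)+1)*((m:ℝ)+2))) ≤ volume (closure (SS m)) := by
  have hmR : (1:ℝ) ≤ (m:ℝ) := Nat.one_le_cast.2 hm1
  set E : Set ℝ := Set.Icc (0:ℝ) (1/((m:ℝ)+1)) \ UU m with hE
  have hsub : E ⊆ closure (SS m) := fun x hx => closure_mem hm1 hx.1 hx.2
  have hcover : Set.Icc (0:ℝ) (1/((m:ℝ)+1)) ⊆ E ∪ UU m := by
    intro x hx
    by_cases hU : x ∈ UU m
    · exact Or.inr hU
    · exact Or.inl ⟨hx, hU⟩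
  have h1 : volume (Set.Icc (0:ℝ) (1/((m:ℝ)+1))) ≤ volume E + volume (UU m) :=
    le_trans (measure_mono hcover) (measure_union_le _ _)
  have h2 : volume (Set.Icc (0:ℝ) (1/((m:ℝ)+1))) = ENNReal.ofReal (1/((m:ℝ)+1)) := by
    rw [Real.volume_Icc, sub_zero]
  have h3 : ZE m 0 = ENNReal.ofReal ((m:ℝ)/(((m:ℝ)+1)*((m:ℝ)+2))) := by
    rw [ZE]
    norm_num
  have h4 : volume (UU m) ≤ ENNReal.ofReal ((m:ℝ)/(((m:ℝ)+1)*((m:ℝ)+2))) := by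
    rw [← h3]; exact vol_UU hm1
  have h5 : ENNReal.ofReal (1/((m:ℝ)+1)) - ENNReal.ofReal ((m:ℝ)/(((m:ℝ)+1)*((m:ℝ)+2)))
      ≤ volume E := by
    rw [tsub_le_iff_right]
    calc ENNReal.ofReal (1/((m:ℝ)+1)) ≤ volume E + volume (UU m) := by rw [← h2]; exact h1
      _ ≤ volume E + ENNReal.ofReal ((m:ℝ)/(((m:ℝ)+1)*((m:ℝ)+2))) := add_le_add_right h4 _
  have h6 : ENNReal.ofReal (1/((m:ℝ)+1)) - ENNReal.ofReal ((m:ℝ)/(((m:ℝ)+1)*((m:ℝ)+2)))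
      = ENNReal.ofReal (2/(((m:ℝ)+1)*((m:ℝ)+2))) := by
    rw [← ENNReal.ofReal_sub _ (by positivity)]
    congr 1
    have d1 : ((m:ℝ)+1) ≠ 0 := by positivity
    have d2 : ((m:ℝ)+2) ≠ 0 := by positivity
    field_simp
    ring
  calc ENNReal.ofReal (2/(((m:ℝ)+1)*((m:ℝ)+2)))
      = ENNReal.ofReal (1/((m:ℝ)+1)) - ENNReal.ofReal ((m:ℝ)/(((m:ℝ)+1)*((m:ℝ)+2))) := h6.symm
    _ ≤ volume E := h5
    _ ≤ volume (closure (SS m)) := measure_mono hsub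

end final

end O1CV


/-- Theorem 6: for `V = {m+1, m+2, …}`, the set `C[V]` (closure of the
set of `x` all of whose O¹-symbols exceed `m`) has positive Lebesgue measure; moreover
`λ(C[V]) > 1/(m+1)²`. -/
theorem o1_CV_tail_positive_measure (m : ℕ) (hm : 0 < m) :
    0 < volume (closure {x : ℝ | x ∈ Set.Icc (0 : ℝ) 1 ∧ ∃ g : ℕ → ℕ,
      x = bO1inf g ∧ ∀ n, m < g n}) ∧
    (1 : ENNReal) / ((m : ENNReal) + 1) ^ 2 <
      volume (closure {x : ℝ | x ∈ Set.Icc (0 : ℝ) 1 ∧ ∃ g : ℕ → ℕ,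
        x = bO1inf g ∧ ∀ n, m < g n}) := by
  have hm1 : 1 ≤ m := hm
  have hmR : (1:ℝ) ≤ (m:ℝ) := Nat.one_le_cast.2 hm1
  have hset : {x : ℝ | x ∈ Set.Icc (0 : ℝ) 1 ∧ ∃ g : ℕ → ℕ,
      x = bO1inf g ∧ ∀ n, m < g n} = O1CV.SS m := rfl
  rw [hset]
  have hlow := O1CV.volume_lower m hm1
  have hlhs : (1 : ENNReal) / ((m : ENNReal) + 1) ^ 2
      = ENNReal.ofReal ((((m:ℝ)+1)^2)⁻¹) := by
    rw [ENNReal.ofReal_inv_of_pos (by positivity)]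
    rw [ENNReal.ofReal_pow (by positivity)]
    rw [ENNReal.ofReal_add (by positivity) (by norm_num), ENNReal.ofReal_natCast,
      ENNReal.ofReal_one, one_div]
  have hstrict : (1 : ENNReal) / ((m : ENNReal) + 1) ^ 2
      < ENNReal.ofReal (2/(((m:ℝ)+1)*((m:ℝ)+2))) := by
    rw [hlhs]
    rw [ENNReal.ofReal_lt_ofReal_iff (by positivity)]
    rw [inv_eq_one_div, div_lt_div_iff₀ (by positivity) (by positivity)]
    nlinarith
  have hmain : (1 : ENNReal) / ((m : ENNReal) + 1) ^ 2 < volume (closure (O1CV.SS m)) :=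
    lt_of_lt_of_le hstrict hlow
  exact ⟨lt_of_le_of_lt bot_le hmain, hmain⟩
end
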